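/- arXiv:1303.1335 — 2 statements merged into one kernel-verified Lean document; each statement's English description precedes it below -/
import Mathlib

section
/- With notation as for Hilbert-driven Gröbner basis computations: if H_{R^i}(t₁,t₂) − H_R(t₁,t₂) = p·t₁^{β₁}t₂^{β₂} + Σ_{α ≰ β} r_α t₁^{α₁}t₂^{α₂} for some β ∈ N² and integer p > 0, then G∖G^i contains exactly p distinct elements of degree β, and G∖G^i contains no element of degree strictly less than β. -/
namespace NC

/-- The free associative algebra on the alphabet `X`, with the words (the free
monoid on `X`) as a basis. -/
abbrev FA (k X : Type) [Field k] := MonoidAlgebra k (FreeMonoid X)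

variable {k X : Type} [Field k]

/-- The monomial on a word `u` (with coefficient `1`). -/
noncomputable def mono (k : Type) [Field k] {X : Type} (u : FreeMonoid X) : FA k X :=
  MonoidAlgebra.of k (FreeMonoid X) u

/-- `u` is a factor of `v`. -/
def IsFactor (u v : FreeMonoid X) : Prop := ∃ w₁ w₂ : FreeMonoid X, w₁ * u * w₂ = v

/-- The leading word of a polynomial (junk value `1` for the zero polynomial). -/
noncomputable def lw [LinearOrder (FreeMonoid X)] (f : FA k X) : FreeMonoid X :=
  WithBot.unbotD 1 f.coeff.support.max

/-- The set of leading words of the nonzero members of `G`. -/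
def lwSet [LinearOrder (FreeMonoid X)] (G : Set (FA k X)) : Set (FreeMonoid X) :=
  {u | ∃ f ∈ G, f ≠ 0 ∧ lw f = u}

/-- The normal words modulo `G` : words having no factor among the leading words of `G`. -/
def nw [LinearOrder (FreeMonoid X)] (G : Set (FA k X)) : Set (FreeMonoid X) :=
  {u | ∀ v ∈ lwSet G, ¬ IsFactor v u}

/-- The two-sided ideal (as a `k`-submodule) generated by a set `S`. -/
noncomputable def ideal2 (k : Type) [Field k] {X : Type} (S : Set (FA k X)) : Submodule k (FA k X) :=
  Submodule.span k {x | ∃ a s b, s ∈ S ∧ x = a * s * b}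

/-- A `k`-submodule of the free algebra which is a two-sided ideal. -/
def IsTwoSided (𝔞 : Submodule k (FA k X)) : Prop :=
  ∀ a x : FA k X, x ∈ 𝔞 → a * x ∈ 𝔞 ∧ x * a ∈ 𝔞

/-- `G` is a Gröbner basis of the (two-sided) ideal `𝔞`. -/
def IsGrobner [LinearOrder (FreeMonoid X)] (𝔞 : Submodule k (FA k X))
    (G : Set (FA k X)) : Prop :=
  (∀ g ∈ G, g ∈ 𝔞) ∧ ∀ f ∈ 𝔞, f ≠ 0 → lw f ∉ nw G

/-- `G` is reduced: every member is monic and normal modulo the remaining members. -/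
def IsReducedGB [LinearOrder (FreeMonoid X)] (G : Set (FA k X)) : Prop :=
  ∀ f ∈ G, f.coeff (lw f) = 1 ∧ ∀ u ∈ f.coeff.support, u ∈ nw (G \ {f})

/-- The fixed linear order on words is admissible. -/
def IsAdmissible (X : Type) [LinearOrder (FreeMonoid X)] : Prop :=
  WellFoundedLT (FreeMonoid X) ∧ (∀ u : FreeMonoid X, u ≠ 1 → 1 < u) ∧
    ∀ u v w₁ w₂ : FreeMonoid X, u < v → w₁ * u * w₂ < w₁ * v * w₂

end NC

namespace NC2
open NC
variable {k X : Type} [Field k]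

/-- The (multi)degree of a word, for the grading determined by `e` on the letters. -/
def mdeg {σ : Type} [AddCommMonoid σ] (e : X → σ) (w : FreeMonoid X) : σ :=
  ((FreeMonoid.toList w).map e).sum

/-- `f` is homogeneous of degree `α`. -/
def IsHomog {σ : Type} [AddCommMonoid σ] (e : X → σ) (α : σ) (f : NC.FA k X) : Prop :=
  ∀ u ∈ f.coeff.support, mdeg e u = α

open Classical in
/-- The degree-`α` homogeneous component of `f`. -/
noncomputable def homComp {σ : Type} [AddCommMonoid σ] (e : X → σ) (α : σ) (f : NC.FA k X) :
    NC.FA k X :=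
  MonoidAlgebra.ofCoeff (Finsupp.filter (fun u => mdeg e u = α) f.coeff)

/-- A homogeneous (two-sided) ideal. -/
def IsHomogIdeal {σ : Type} [AddCommMonoid σ] (e : X → σ) (𝔞 : Submodule k (NC.FA k X)) : Prop :=
  NC.IsTwoSided 𝔞 ∧ ∀ f ∈ 𝔞, ∀ α : σ, homComp e α f ∈ 𝔞

/-- Polynomials supported on a given set of words. -/
noncomputable def wsupported (k : Type) [Field k] {X : Type} (S : Set (FreeMonoid X)) :
    Submodule k (NC.FA k X) :=
  (Finsupp.supported k k S).comap (MonoidAlgebra.coeffLinearEquiv k).toLinearMap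

/-- Dimension of the image, in the quotient by `𝔞`, of the span of the words in `S`. -/
noncomputable def hilbS (𝔞 : Submodule k (NC.FA k X)) (S : Set (FreeMonoid X)) : ℕ :=
  Module.finrank k ↥((wsupported k S).map 𝔞.mkQ)

/-- The multigraded Hilbert function of the quotient algebra `k⟨X⟩/𝔞`. -/
noncomputable def hilb {σ : Type} [AddCommMonoid σ] (e : X → σ) (𝔞 : Submodule k (NC.FA k X))
    (α : σ) : ℕ :=
  hilbS 𝔞 {u | mdeg e u = α}

/-- The monomial ideal on a set of words. -/
noncomputable def monIdeal (k : Type) [Field k] {X : Type} (V : Set (FreeMonoid X)) :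
    Submodule k (NC.FA k X) :=
  NC.ideal2 k ((fun u => NC.mono k u) '' V)

/-- Partial sums of a Hilbert function. -/
def psum (H : ℕ → ℕ) (n : ℕ) : ℕ := ∑ i ∈ Finset.range (n + 1), H i

/-- The growth function is bounded by a polynomial of degree `d`. -/
def PolyBoundedBy (H : ℕ → ℕ) (d : ℕ) : Prop := ∃ C : ℕ, ∀ n, psum H n ≤ C * (n + 1) ^ d

/-- Polynomial growth (of some degree). -/
def PolyGrowth (H : ℕ → ℕ) : Prop := ∃ d, PolyBoundedBy H d

/-- Polynomial growth of degree exactly `d`. -/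
def PolyGrowthDeg (H : ℕ → ℕ) (d : ℕ) : Prop :=
  ∃ C : ℕ, 0 < C ∧ ∀ n, psum H n ≤ C * (n + 1) ^ d ∧ (n + 1) ^ d ≤ C * psum H n

/-- Gelfand-Kirillov dimension of a graded algebra with Hilbert function `H`, as an
extended natural number. -/
noncomputable def gkdimH (H : ℕ → ℕ) : ℕ∞ :=
  sInf ((fun d : ℕ => (d : ℕ∞)) '' {d | PolyBoundedBy H d})

end NC2

namespace NCdl

/-- The deg-lex order on the words over `{x₁, x₂}` (with `x₂ > x₁`): words are compared
first by total degree, then by degree in `x₂`, and finally lexicographically. -/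
noncomputable instance deglex : LinearOrder (FreeMonoid (Fin 2)) :=
  LinearOrder.lift'
    (fun w => toLex ((FreeMonoid.toList w).length,
      toLex ((FreeMonoid.toList w).count (1 : Fin 2), FreeMonoid.toList w)))
    (by
      intro u v h
      exact FreeMonoid.toList.injective (congrArg (fun p => (ofLex (ofLex p).2).2) h))

end NCdl

namespace NCx
/-- The `ℤ²`-grading (as an `ℕ²`-grading) of `k⟨x₁,x₂⟩` with
`deg x₁ = (1,0)`, `deg x₂ = (0,1)`. -/
def e2 : Fin 2 → ℕ × ℕ := fun i => if i = 0 then (1, 0) else (0, 1)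

/-- `G'` is an initial segment of `G` for the enumeration of `G` by increasing leading
words, i.e. `G' = G^i` for some `i` (or `G' = G`). -/
def IsInitSeg {k X : Type} [Field k] [LinearOrder (FreeMonoid X)]
    (G G' : Set (NC.FA k X)) : Prop :=
  G' ⊆ G ∧ ∀ g ∈ G', ∀ h ∈ G, NC.lw h < NC.lw g → h ∈ G'
end NCx

namespace Stmt4Aux
open NC NC2 NCx

local notation "W" => FreeMonoid (Fin 2)

variable {k : Type} [Field k]

/-! ### Basic facts about the deg-lex order and multidegrees -/

lemma lt_of_length_lt {u v : W} (h : (FreeMonoid.toList u).length < (FreeMonoid.toList v).length) :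
    u < v := by
  have h2 : toLex ((FreeMonoid.toList u).length,
        toLex ((FreeMonoid.toList u).count (1 : Fin 2), FreeMonoid.toList u)) <
      toLex ((FreeMonoid.toList v).length,
        toLex ((FreeMonoid.toList v).count (1 : Fin 2), FreeMonoid.toList v)) := by
    rw [Prod.Lex.lt_iff]; exact Or.inl h
  exact h2

lemma mdeg_mul (u v : W) : mdeg e2 (u * v) = mdeg e2 u + mdeg e2 v := by
  unfold NC2.mdeg
  rw [FreeMonoid.toList_mul, List.map_append, List.sum_append]

lemma mdeg_fst_add_snd (u : W) :
    (mdeg e2 u).1 + (mdeg e2 u).2 = (FreeMonoid.toList u).length := by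
  unfold NC2.mdeg
  induction FreeMonoid.toList u with
  | nil => simp
  | cons a l ih =>
    have ha : (e2 a).1 + (e2 a).2 = 1 := by
      by_cases h : a = 0 <;> simp [NCx.e2, h]
    simp only [List.map_cons, List.sum_cons, List.length_cons, Prod.fst_add, Prod.snd_add]
    omega

lemma eq_one_of_mdeg_eq_zero {u : W} (h : mdeg e2 u = 0) : u = 1 := by
  have h1 := mdeg_fst_add_snd u
  rw [h] at h1
  simp only [Prod.fst_zero, Prod.snd_zero, add_zero] at h1
  have h2 : FreeMonoid.toList u = [] := List.eq_nil_of_length_eq_zero h1.symm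
  exact FreeMonoid.toList.injective (by simpa using h2)

lemma length_pos_of_ne_one {u : W} (h : u ≠ 1) : 0 < (FreeMonoid.toList u).length := by
  rcases Nat.eq_zero_or_pos (FreeMonoid.toList u).length with h0 | h0
  · exact absurd (FreeMonoid.toList.injective (by simpa using List.eq_nil_of_length_eq_zero h0)) h
  · exact h0

lemma mdeg_le_of_factor {v u : W} (h : IsFactor v u) : mdeg e2 v ≤ mdeg e2 u := by
  obtain ⟨a, b, rfl⟩ := h
  rw [mdeg_mul, mdeg_mul]
  calc mdeg e2 v ≤ mdeg e2 v + mdeg e2 b := le_add_self.trans_eq (add_comm _ _)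
    _ ≤ mdeg e2 a + (mdeg e2 v + mdeg e2 b) := le_add_self
    _ = mdeg e2 a + mdeg e2 v + mdeg e2 b := (add_assoc _ _ _).symm

lemma factor_eq_of_mdeg_eq {v u : W} (h : IsFactor v u) (he : mdeg e2 v = mdeg e2 u) : v = u := by
  obtain ⟨a, b, rfl⟩ := h
  rw [mdeg_mul, mdeg_mul] at he
  have h1 : (mdeg e2 a).1 + (mdeg e2 v).1 + (mdeg e2 b).1 = (mdeg e2 v).1 := by
    have := congrArg Prod.fst he; simpa [Prod.fst_add] using this.symm
  have h2 : (mdeg e2 a).2 + (mdeg e2 v).2 + (mdeg e2 b).2 = (mdeg e2 v).2 := by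
    have := congrArg Prod.snd he; simpa [Prod.snd_add] using this.symm
  have ha : a = 1 := by
    apply eq_one_of_mdeg_eq_zero
    have := mdeg_fst_add_snd a
    have : (mdeg e2 a).1 = 0 ∧ (mdeg e2 a).2 = 0 := by omega
    exact Prod.ext this.1 this.2
  have hb : b = 1 := by
    apply eq_one_of_mdeg_eq_zero
    have : (mdeg e2 b).1 = 0 ∧ (mdeg e2 b).2 = 0 := by omega
    exact Prod.ext this.1 this.2
  rw [ha, hb, one_mul, mul_one]

lemma isFactor_refl (u : W) : IsFactor u u := ⟨1, 1, by rw [one_mul, mul_one]⟩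

/-! ### Leading words -/

lemma lw_mem_support {f : FA k (Fin 2)} (h : f ≠ 0) : lw f ∈ f.coeff.support := by
  obtain ⟨m, hm⟩ := Finset.max_of_nonempty (Finsupp.support_nonempty_iff.2 (show f.coeff ≠ 0 by rwa [Ne, MonoidAlgebra.coeff_eq_zero]))
  have he : lw f = m := by rw [lw, hm]; rfl
  rw [he]; exact Finset.mem_of_max hm

lemma le_lw {f : FA k (Fin 2)} {u} (hu : u ∈ f.coeff.support) : u ≤ lw f := by
  have h : f ≠ 0 := by rintro rfl; simp at hu
  obtain ⟨m, hm⟩ := Finset.max_of_nonempty (Finsupp.support_nonempty_iff.2 (show f.coeff ≠ 0 by rwa [Ne, MonoidAlgebra.coeff_eq_zero]))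
  have he : lw f = m := by rw [lw, hm]; rfl
  rw [he]
  exact_mod_cast (Finset.le_max hu).trans_eq hm

lemma nw_anti {G₁ G₂ : Set (FA k (Fin 2))} (h : G₁ ⊆ G₂) : nw G₂ ⊆ nw G₁ := by
  intro u hu v hv
  exact hu v (by obtain ⟨f, hf, hf0, rfl⟩ := hv; exact ⟨f, h hf, hf0, rfl⟩)

lemma ne_zero_of_mem_reduced {G : Set (FA k (Fin 2))} (hred : IsReducedGB G) {g} (hg : g ∈ G) :
    g ≠ 0 := by
  intro h0
  have := (hred g hg).1
  rw [h0] at this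
  simp at this

lemma lw_not_nw {G : Set (FA k (Fin 2))} (hred : IsReducedGB G) {g} (hg : g ∈ G) :
    lw g ∉ nw G :=
  fun hn => hn (lw g) ⟨g, hg, ne_zero_of_mem_reduced hred hg, rfl⟩ (isFactor_refl _)

lemma lw_nw_diff {G : Set (FA k (Fin 2))} (hred : IsReducedGB G) {g} (hg : g ∈ G) :
    lw g ∈ nw (G \ {g}) :=
  (hred g hg).2 (lw g) (lw_mem_support (ne_zero_of_mem_reduced hred hg))

lemma lw_injOn {G : Set (FA k (Fin 2))} (hred : IsReducedGB G) : Set.InjOn lw G := by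
  intro g hg g' hg' hlw
  by_contra hne
  exact lw_nw_diff hred hg (lw g')
    ⟨g', ⟨hg', fun h => hne (h.symm ▸ rfl)⟩, ne_zero_of_mem_reduced hred hg', rfl⟩
    (hlw ▸ isFactor_refl (lw g'))

/-! ### Monomial ideals and the Hilbert function -/

lemma mono_mul (a b : W) : NC.mono k a * NC.mono k b = NC.mono k (a * b) := by
  unfold NC.mono
  rw [map_mul]

def NWords (V : Set W) : Set W := {u | ∀ v ∈ V, ¬ IsFactor v u}

lemma monIdeal_le (V : Set W) :
    NC2.monIdeal k V ≤ MonoidAlgebra.supported k k {u : W | u ∉ NWords V} := by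
  classical
  unfold NC2.monIdeal NC.ideal2
  apply Submodule.span_le.2
  rintro x ⟨a, s, b, ⟨v, hv, rfl⟩, rfl⟩
  rw [SetLike.mem_coe, MonoidAlgebra.mem_supported]
  intro w hw
  have h1 := MonoidAlgebra.support_coeff_mul_subset (a * NC.mono k v) b
  have hw1 := h1 hw
  rw [Finset.mem_mul] at hw1
  obtain ⟨y, hy, z, hz, hyz⟩ := hw1
  have h2 := MonoidAlgebra.support_coeff_mul_subset a (NC.mono k v) hy
  rw [Finset.mem_mul] at h2
  obtain ⟨p, hp, q, hq, hpq⟩ := h2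
  have hqv : q = v := by
    have : q ∈ ({v} : Finset W) := by
      have : (NC.mono k v).coeff.support ⊆ {v} := by
        unfold NC.mono
        rw [MonoidAlgebra.of_apply, MonoidAlgebra.coeff_single]
        exact Finsupp.support_single_subset
      exact this hq
    simpa using this
  subst hqv
  intro hnw
  exact hnw q hv ⟨p, z, by rw [← hyz, ← hpq]⟩

lemma mono_mem_monIdeal {V : Set W} {v u : W} (hv : v ∈ V) (h : IsFactor v u) :
    NC.mono k u ∈ NC2.monIdeal k V := by
  obtain ⟨a, b, rfl⟩ := h
  apply Submodule.subset_span
  exact ⟨NC.mono k a, NC.mono k v, NC.mono k b, ⟨v, hv, rfl⟩, by rw [mono_mul, mono_mul]⟩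

lemma finite_mdeg_eq (α : ℕ × ℕ) : {u : W | mdeg e2 u = α}.Finite := by
  have h1 : {u : W | mdeg e2 u = α} ⊆
      FreeMonoid.toList ⁻¹' {l : List (Fin 2) | l.length = α.1 + α.2} := by
    intro u hu
    have := mdeg_fst_add_snd u
    simp only [Set.mem_setOf_eq] at hu
    simp only [Set.mem_preimage, Set.mem_setOf_eq]
    rw [← this, hu]
  exact Set.Finite.subset ((List.finite_length_eq (Fin 2) (α.1 + α.2)).preimage
    (Set.injOn_of_injective FreeMonoid.toList.injective)) h1

lemma hilb_monIdeal (V : Set W) (α : ℕ × ℕ) :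
    NC2.hilb (k := k) NCx.e2 (NC2.monIdeal k V) α
      = ({u : W | mdeg e2 u = α} ∩ NWords V).ncard := by
  classical
  set S : Set W := {u : W | mdeg e2 u = α} with hS
  set T : Set W := S ∩ NWords V with hTdef
  have hT : T.Finite := (finite_mdeg_eq α).subset Set.inter_subset_left
  letI : Fintype T := hT.fintype
  set Q := (NC2.monIdeal k V).mkQ with hQ
  have h1 : NC2.wsupported k S
      = Submodule.span k ((fun u : W => MonoidAlgebra.single u (1 : k)) '' S) :=
    MonoidAlgebra.supported_eq_span_single k S
  unfold NC2.hilb NC2.hilbS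
  rw [h1, Submodule.map_span]
  have hspan : Submodule.span k (Q '' ((fun u : W => MonoidAlgebra.single u (1 : k)) '' S))
      = Submodule.span k (Q '' ((fun u : W => MonoidAlgebra.single u (1 : k)) '' T)) := by
    apply le_antisymm
    · rw [Submodule.span_le]
      rintro x ⟨y, ⟨u, hu, rfl⟩, rfl⟩
      by_cases hn : u ∈ NWords V
      · exact Submodule.subset_span ⟨_, ⟨u, ⟨hu, hn⟩, rfl⟩, rfl⟩
      · have hmem : MonoidAlgebra.single u (1 : k) ∈ NC2.monIdeal k V := by
          simp only [NWords, Set.mem_setOf_eq, not_forall, not_not] at hn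
          obtain ⟨v, hv, hf⟩ := hn
          have := mono_mem_monIdeal (k := k) hv hf
          unfold NC.mono at this
          rwa [MonoidAlgebra.of_apply] at this
        have hz : Q (MonoidAlgebra.single u (1 : k)) = 0 := by
          rw [hQ, Submodule.mkQ_apply, Submodule.Quotient.mk_eq_zero]
          exact hmem
        rw [SetLike.mem_coe, hz]
        exact Submodule.zero_mem _
    · exact Submodule.span_mono (Set.image_mono (Set.image_mono Set.inter_subset_left))
  rw [hspan]
  have hli : LinearIndependent k (fun t : T => Q (MonoidAlgebra.single (t : W) (1 : k))) := by
    have hli0 : LinearIndependent k (fun t : T => MonoidAlgebra.single (t : W) (1 : k)) := by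
      have hb := (MonoidAlgebra.basis W k).linearIndependent
      have h := hb.comp (Subtype.val : T → W) Subtype.val_injective
      have he : (MonoidAlgebra.basis W k) ∘ (Subtype.val : T → W)
          = fun t : T => MonoidAlgebra.single (t : W) (1 : k) := by
        funext t
        simp [MonoidAlgebra.basis_apply]
      rwa [he] at h
    have hdisj : Disjoint (Submodule.span k
        (Set.range fun t : T => MonoidAlgebra.single (t : W) (1 : k)))
        (LinearMap.ker Q) := by
      rw [hQ, Submodule.ker_mkQ]
      have hsub1 : Submodule.span k (Set.range fun t : T => MonoidAlgebra.single (t : W) (1 : k))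
          ≤ MonoidAlgebra.supported k k (NWords V) := by
        rw [Submodule.span_le]
        rintro x ⟨t, rfl⟩
        rw [SetLike.mem_coe, MonoidAlgebra.mem_supported]
        intro w hw
        have : w ∈ ({(t : W)} : Finset W) := Finsupp.support_single_subset hw
        simp only [Finset.mem_singleton] at this
        subst this
        exact t.2.2
      have hdis0 : Disjoint (MonoidAlgebra.supported k k (NWords V))
          (MonoidAlgebra.supported k k {u : W | u ∉ NWords V}) := by
        have hF := Finsupp.disjoint_supported_supported (M := k) (R := k)
          (Set.disjoint_left.2 fun (u : W) h1 (h2 : u ∈ {u : W | u ∉ NWords V}) => h2 h1)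
        refine Submodule.disjoint_def.2 fun x h1 h2 => ?_
        exact MonoidAlgebra.coeff_eq_zero.1 (Submodule.disjoint_def.1 hF x.coeff h1 h2)
      exact hdis0.mono hsub1 (monIdeal_le V)
    have := hli0.map hdisj
    exact this
  have himg : Q '' ((fun u : W => MonoidAlgebra.single u (1 : k)) '' T)
      = Set.range fun t : T => Q (MonoidAlgebra.single (t : W) (1 : k)) := by
    rw [Set.image_image, Set.image_eq_range]
  rw [himg, finrank_span_eq_card hli]
  rw [Set.ncard_eq_toFinset_card' T, Set.toFinset_card]

/-! ### Homogeneity of reduced Gröbner basis elements -/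

lemma homComp_apply {α : ℕ × ℕ} (f : FA k (Fin 2)) (u : W) :
    (NC2.homComp NCx.e2 α f).coeff u = if mdeg e2 u = α then f.coeff u else 0 := by
  unfold NC2.homComp
  simp [Finsupp.filter_apply]

lemma mem_G_homog {𝔞 : Submodule k (FA k (Fin 2))} (hh : NC2.IsHomogIdeal NCx.e2 𝔞)
    {G : Set (FA k (Fin 2))} (hGB : NC.IsGrobner 𝔞 G) (hred : NC.IsReducedGB G)
    {g : FA k (Fin 2)} (hg : g ∈ G) : NC2.IsHomog NCx.e2 (mdeg e2 (lw g)) g := by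
  classical
  have hgne : g ≠ 0 := ne_zero_of_mem_reduced hred hg
  set γ := mdeg e2 (lw g) with hγ
  set h := NC2.homComp NCx.e2 γ g with hhdef
  set f := g - h with hfdef
  have hfa : f ∈ 𝔞 := Submodule.sub_mem _ (hGB.1 g hg) (hh.2 g (hGB.1 g hg) γ)
  have happ : ∀ u, h.coeff u = if mdeg e2 u = γ then g.coeff u else 0 := fun u => homComp_apply g u
  have hfsupp : f.coeff.support ⊆ g.coeff.support := by
    intro u hu
    rw [Finsupp.mem_support_iff] at hu ⊢
    intro h0
    apply hu
    have hh0 : h.coeff u = 0 := by rw [happ u]; split <;> simp [h0]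
    rw [hfdef, MonoidAlgebra.coeff_sub, Finsupp.sub_apply, h0, hh0, sub_zero]
  by_cases hf0 : f = 0
  · intro u hu
    have hgh : g = h := by rwa [sub_eq_zero] at hf0
    rw [hgh] at hu
    rw [Finsupp.mem_support_iff, happ u] at hu
    by_contra hne
    rw [if_neg hne] at hu
    exact hu rfl
  · exfalso
    have hnotnw := hGB.2 f hfa hf0
    simp only [NC.nw, Set.mem_setOf_eq, not_forall, not_not] at hnotnw
    obtain ⟨v, hv, hfac⟩ := hnotnw
    obtain ⟨g'', hg'', hg''ne, rfl⟩ := hv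
    have hlwf : lw f ∈ g.coeff.support := hfsupp (lw_mem_support hf0)
    have hnorm := (hred g hg).2 (lw f) hlwf
    have hg''g : g'' = g := by
      by_contra hne
      exact hnorm _ ⟨g'', ⟨hg'', hne⟩, hg''ne, rfl⟩ hfac
    obtain ⟨a, b, hab⟩ := hfac
    rw [hg''g] at hab
    by_cases hone : a = 1 ∧ b = 1
    · obtain ⟨rfl, rfl⟩ := hone
      rw [one_mul, mul_one] at hab
      have hfz : f.coeff (lw g) = 0 := by
        have hh1 : h.coeff (lw g) = g.coeff (lw g) := by rw [happ, if_pos rfl]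
        rw [hfdef, MonoidAlgebra.coeff_sub, Finsupp.sub_apply, hh1, sub_self]
      have := Finsupp.mem_support_iff.1 (lw_mem_support hf0)
      rw [← hab] at this
      exact this hfz
    · have hlen : (FreeMonoid.toList (lw g)).length < (FreeMonoid.toList (lw f)).length := by
        rw [← hab]
        rw [FreeMonoid.toList_mul, FreeMonoid.toList_mul, List.length_append, List.length_append]
        rcases not_and_or.mp hone with hne | hne
        · have := length_pos_of_ne_one hne; omega
        · have := length_pos_of_ne_one hne; omega
      exact absurd (le_lw hlwf) (not_le.2 (lt_of_length_lt hlen))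

lemma mdeg_lw_of_homog {g : FA k (Fin 2)} (hg0 : g ≠ 0) {α : ℕ × ℕ}
    (hg : NC2.IsHomog NCx.e2 α g) : mdeg e2 (lw g) = α :=
  hg _ (lw_mem_support hg0)

end Stmt4Aux

open Stmt4Aux in
/-- Hilbert-driven computation: if the difference of the two-variable
Hilbert series of `R^i = k⟨x₁,x₂⟩/(lw(G^i))` and `R = k⟨x₁,x₂⟩/(lw(G))` has
coefficient `p > 0` at `β`, vanishing coefficients at all `α < β`, then `G ∖ G^i`
contains exactly `p` elements of degree `β` and none of degree `< β`.
(Initial segments `G'` of `G` for the order by leading words are exactly the `G^i`.) -/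
theorem stmt_4 (k : Type) [Field k]
    (𝔞 : Submodule k (NC.FA k (Fin 2))) (hh : NC2.IsHomogIdeal NCx.e2 𝔞)
    (G : Set (NC.FA k (Fin 2))) (hGB : NC.IsGrobner 𝔞 G) (hred : NC.IsReducedGB G)
    (G' : Set (NC.FA k (Fin 2))) (hseg : NCx.IsInitSeg G G')
    (β : ℕ × ℕ) (p : ℕ) (hp : 0 < p)
    (hcoef : NC2.hilb NCx.e2 (NC2.monIdeal k (NC.lwSet G')) β =
      NC2.hilb NCx.e2 (NC2.monIdeal k (NC.lwSet G)) β + p)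
    (hlow : ∀ α : ℕ × ℕ, α < β →
      NC2.hilb NCx.e2 (NC2.monIdeal k (NC.lwSet G')) α =
        NC2.hilb NCx.e2 (NC2.monIdeal k (NC.lwSet G)) α) :
    Set.ncard {g | g ∈ G ∧ g ∉ G' ∧ g ≠ 0 ∧ NC2.IsHomog NCx.e2 β g} = p ∧
    ∀ g ∈ G, g ∉ G' → ∀ α : ℕ × ℕ, α < β → ¬ (g ≠ 0 ∧ NC2.IsHomog NCx.e2 α g) := by
  classical
  have hnwmono : NC.nw G ⊆ NC.nw G' := nw_anti hseg.1
  have hsubG' : ∀ {g : NC.FA k (Fin 2)}, g ∉ G' → G' ⊆ G \ {g} := fun {g} hg' x hx =>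
    ⟨hseg.1 hx, fun hxg => hg' ((Set.mem_singleton_iff.mp hxg) ▸ hx)⟩
  have hA : ∀ α : ℕ × ℕ, NC2.hilb NCx.e2 (NC2.monIdeal k (NC.lwSet G')) α
      = ({u : FreeMonoid (Fin 2) | NC2.mdeg NCx.e2 u = α} ∩ NC.nw G').ncard :=
    fun α => hilb_monIdeal (NC.lwSet G') α
  have hB : ∀ α : ℕ × ℕ, NC2.hilb NCx.e2 (NC2.monIdeal k (NC.lwSet G)) α
      = ({u : FreeMonoid (Fin 2) | NC2.mdeg NCx.e2 u = α} ∩ NC.nw G).ncard :=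
    fun α => hilb_monIdeal (NC.lwSet G) α
  have hdiff : ∀ α : ℕ × ℕ,
      NC2.hilb NCx.e2 (NC2.monIdeal k (NC.lwSet G')) α
        = NC2.hilb NCx.e2 (NC2.monIdeal k (NC.lwSet G)) α
          + (({u : FreeMonoid (Fin 2) | NC2.mdeg NCx.e2 u = α} ∩ NC.nw G')
              \ ({u : FreeMonoid (Fin 2) | NC2.mdeg NCx.e2 u = α} ∩ NC.nw G)).ncard := by
    intro α
    rw [hA, hB]
    have hsub : {u : FreeMonoid (Fin 2) | NC2.mdeg NCx.e2 u = α} ∩ NC.nw G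
        ⊆ {u : FreeMonoid (Fin 2) | NC2.mdeg NCx.e2 u = α} ∩ NC.nw G' :=
      Set.inter_subset_inter_right _ hnwmono
    have hfin : ({u : FreeMonoid (Fin 2) | NC2.mdeg NCx.e2 u = α} ∩ NC.nw G').Finite :=
      (finite_mdeg_eq α).subset Set.inter_subset_left
    have h1 := Set.ncard_diff hsub (hfin.subset hsub)
    have h2 := Set.ncard_le_ncard hsub hfin
    omega
  have concl2 : ∀ g ∈ G, g ∉ G' → ∀ α : ℕ × ℕ, α < β →
      ¬ (g ≠ 0 ∧ NC2.IsHomog NCx.e2 α g) := by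
    rintro g hg hg' α hα ⟨hg0, hhom⟩
    have hDempty : (({u : FreeMonoid (Fin 2) | NC2.mdeg NCx.e2 u = α} ∩ NC.nw G')
        \ ({u : FreeMonoid (Fin 2) | NC2.mdeg NCx.e2 u = α} ∩ NC.nw G)) = ∅ := by
      have h := hdiff α
      rw [hlow α hα] at h
      have hfin : (({u : FreeMonoid (Fin 2) | NC2.mdeg NCx.e2 u = α} ∩ NC.nw G')
          \ ({u : FreeMonoid (Fin 2) | NC2.mdeg NCx.e2 u = α} ∩ NC.nw G)).Finite :=
        ((finite_mdeg_eq α).subset Set.inter_subset_left).subset Set.diff_subset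
      refine (Set.ncard_eq_zero hfin).1 ?_
      omega
    have hlwg : NC.lw g ∈ (({u : FreeMonoid (Fin 2) | NC2.mdeg NCx.e2 u = α} ∩ NC.nw G')
        \ ({u : FreeMonoid (Fin 2) | NC2.mdeg NCx.e2 u = α} ∩ NC.nw G)) := by
      refine ⟨⟨mdeg_lw_of_homog hg0 hhom, ?_⟩, ?_⟩
      · exact nw_anti (hsubG' hg') (lw_nw_diff hred hg)
      · rintro ⟨-, hnwG⟩
        exact lw_not_nw hred hg hnwG
    rw [hDempty] at hlwg
    exact hlwg
  refine ⟨?_, concl2⟩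
  have himg : NC.lw '' {g | g ∈ G ∧ g ∉ G' ∧ g ≠ 0 ∧ NC2.IsHomog NCx.e2 β g}
      = (({u : FreeMonoid (Fin 2) | NC2.mdeg NCx.e2 u = β} ∩ NC.nw G')
          \ ({u : FreeMonoid (Fin 2) | NC2.mdeg NCx.e2 u = β} ∩ NC.nw G)) := by
    ext u
    constructor
    · rintro ⟨g, ⟨hg, hg', hg0, hhom⟩, rfl⟩
      refine ⟨⟨mdeg_lw_of_homog hg0 hhom, ?_⟩, ?_⟩
      · exact nw_anti (hsubG' hg') (lw_nw_diff hred hg)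
      · rintro ⟨-, hnwG⟩
        exact lw_not_nw hred hg hnwG
    · rintro ⟨⟨hmd, hnw'⟩, hnot⟩
      have hmd' : NC2.mdeg NCx.e2 u = β := hmd
      have hnotnw : u ∉ NC.nw G := fun h => hnot ⟨hmd, h⟩
      simp only [NC.nw, Set.mem_setOf_eq, not_forall, not_not] at hnotnw
      obtain ⟨v, hv, hfac⟩ := hnotnw
      obtain ⟨g₀, hg₀, hg₀0, rfl⟩ := hv
      have hg₀' : g₀ ∉ G' := fun hmem => hnw' _ ⟨g₀, hmem, hg₀0, rfl⟩ hfac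
      have hhom := mem_G_homog hh hGB hred hg₀
      have hle : NC2.mdeg NCx.e2 (NC.lw g₀) ≤ β := by
        rw [← hmd']
        exact mdeg_le_of_factor hfac
      have heq : NC2.mdeg NCx.e2 (NC.lw g₀) = β := by
        by_contra hne
        exact concl2 g₀ hg₀ hg₀' _ (lt_of_le_of_ne hle hne) ⟨hg₀0, hhom⟩
      have hu : NC.lw g₀ = u := factor_eq_of_mdeg_eq hfac (heq.trans hmd'.symm)
      exact ⟨g₀, ⟨hg₀, hg₀', hg₀0, heq ▸ hhom⟩, hu⟩
  have hinj : Set.InjOn NC.lw {g | g ∈ G ∧ g ∉ G' ∧ g ≠ 0 ∧ NC2.IsHomog NCx.e2 β g} :=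
    (lw_injOn hred).mono (fun g hg => hg.1)
  have hcard := Set.ncard_image_of_injOn hinj
  rw [himg] at hcard
  have h := hdiff β
  rw [hcoef] at h
  omega
end

section
/- Let X = {x₁,...,x_n}, G the reduced Gröbner basis of a homogeneous ideal 𝔞 in the graded free algebra k⟨X⟩ with lw(G) consisting of Lyndon words, and A = k⟨X⟩/𝔞. Then the Hilbert series of A factors as H_A(t) = ∏_{u ∈ 𝔏(G)} (1 − t^{deg(u)})^{-1}, and the Gelfand-Kirillov dimension of A equals the cardinality of 𝔏(G); in particular A has polynomial growth if and only if 𝔏(G) is finite. -/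
namespace NC4
open NC
variable {N : ℕ}

/-- The lexicographic comparison `u >_lex v` on words over the ordered alphabet `Fin N`
(with `x_i > x_j` iff `i > j`). -/
def LexGt (u v : FreeMonoid (Fin N)) : Prop :=
  ∃ (r s t : FreeMonoid (Fin N)) (i j : Fin N), j < i ∧
    u = r * FreeMonoid.of i * s ∧ v = r * FreeMonoid.of j * t

/-- Lyndon words: nonempty words `u` with `u >_lex w*v` for every nontrivial
factorization `u = v*w`. -/
def IsLyndon (u : FreeMonoid (Fin N)) : Prop :=
  u ≠ 1 ∧ ∀ v w : FreeMonoid (Fin N), v ≠ 1 → w ≠ 1 → u = v * w → LexGt u (w * v)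

/-- The plex comparison `u >_plex v`: `u` is a proper prefix of `v`, or `u >_lex v`. -/
def PlexGt (u v : FreeMonoid (Fin N)) : Prop :=
  (∃ w : FreeMonoid (Fin N), w ≠ 1 ∧ v = u * w) ∨ LexGt u v

/-- `u ≤_plex v`. -/
def PlexLe (u v : FreeMonoid (Fin N)) : Prop := u = v ∨ PlexGt v u

variable {k : Type} [Field k]

/-- `𝔏(G)`: the set of Lyndon words which are normal modulo `G`. -/
def LyndonNormal [LinearOrder (FreeMonoid (Fin N))] (G : Set (NC.FA k (Fin N))) :
    Set (FreeMonoid (Fin N)) :=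
  {u | IsLyndon u ∧ u ∈ NC.nw G}

end NC4


namespace WordC
variable {α : Type} [LinearOrder α]

/-- strict lexicographic "greater at first difference". -/
def LGt (u v : List α) : Prop :=
  ∃ r s t : List α, ∃ i j : α, j < i ∧ u = r ++ i :: s ∧ v = r ++ j :: t

theorem lgt_nil_right (u : List α) : ¬ LGt u [] := by
  rintro ⟨r, s, t, i, j, hij, hu, hv⟩; simp at hv

theorem lgt_nil_left (v : List α) : ¬ LGt [] v := by
  rintro ⟨r, s, t, i, j, hij, hu, hv⟩; simp at hu

theorem LGt.append_both {u v : List α} (h : LGt u v) (x y : List α) :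
    LGt (u ++ x) (v ++ y) := by
  obtain ⟨r, s, t, i, j, hij, hu, hv⟩ := h
  exact ⟨r, s ++ x, t ++ y, i, j, hij, by simp [hu], by simp [hv]⟩

theorem LGt.append_fst {u v : List α} (h : LGt u v) (x : List α) : LGt (u ++ x) v := by
  simpa using h.append_both x []

theorem LGt.append_snd {u v : List α} (h : LGt u v) (y : List α) : LGt u (v ++ y) := by
  simpa using h.append_both [] y

theorem LGt.append_left {u v : List α} (h : LGt u v) (w : List α) :
    LGt (w ++ u) (w ++ v) := by
  obtain ⟨r, s, t, i, j, hij, hu, hv⟩ := h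
  exact ⟨w ++ r, s, t, i, j, hij, by simp [hu], by simp [hv]⟩

theorem LGt.of_append_left {u v w : List α} (h : LGt (w ++ u) (w ++ v)) : LGt u v := by
  induction w with
  | nil => simpa using h
  | cons a w ih =>
    obtain ⟨r, s, t, i, j, hij, hu, hv⟩ := h
    cases r with
    | nil =>
      simp only [List.nil_append, List.cons_append, List.cons.injEq] at hu hv
      rw [← hu.1, ← hv.1] at hij
      exact absurd hij (lt_irrefl a)
    | cons b r =>
      simp only [List.cons_append, List.cons.injEq] at hu hv
      exact ih ⟨r, s, t, i, j, hij, hu.2, hv.2⟩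

theorem LGt.not_prefix_left {u v : List α} (h : LGt u v) : ¬ u <+: v := by
  rintro ⟨c, rfl⟩
  obtain ⟨r, s, t, i, j, hij, hu, hv⟩ := h
  rw [hu] at hv
  simp only [List.append_assoc, List.cons_append, List.append_cancel_left_eq,
    List.cons.injEq] at hv
  rw [hv.1] at hij
  exact absurd hij (lt_irrefl j)

theorem LGt.not_prefix_right {u v : List α} (h : LGt u v) : ¬ v <+: u := by
  rintro ⟨c, rfl⟩
  obtain ⟨r, s, t, i, j, hij, hu, hv⟩ := h
  rw [hv] at hu
  simp only [List.append_assoc, List.cons_append, List.append_cancel_left_eq,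
    List.cons.injEq] at hu
  rw [hu.1] at hij
  exact absurd hij (lt_irrefl i)

theorem lgt_irrefl (u : List α) : ¬ LGt u u := fun h => h.not_prefix_left (List.prefix_refl u)

theorem LGt.trans {u v w : List α} (h1 : LGt u v) (h2 : LGt v w) : LGt u w := by
  obtain ⟨r1, s1, t1, i1, j1, hij1, hu1, hv1⟩ := h1
  obtain ⟨r2, s2, t2, i2, j2, hij2, hv2, hw2⟩ := h2
  rw [hv1] at hv2
  rcases List.append_eq_append_iff.1 hv2 with ⟨a, ha, hb⟩ | ⟨a, ha, hb⟩
  · -- r2 = r1 ++ a , j1 :: t1 = a ++ i2 :: s2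
    cases a with
    | nil =>
      simp only [List.append_nil] at ha
      simp only [List.nil_append, List.cons.injEq] at hb
      refine ⟨r1, s1, t2, i1, j2, ?_, hu1, by rw [hw2, ha]⟩
      rw [hb.1] at hij1; exact lt_trans hij2 hij1
    | cons b a =>
      simp only [List.cons_append, List.cons.injEq] at hb
      exact ⟨r1, s1, a ++ j2 :: t2, i1, j1, hij1, hu1, by
        rw [hw2, ha, ← hb.1]; simp⟩
  · -- r1 = r2 ++ a, i2 :: s2 = a ++ j1 :: t1
    cases a with
    | nil =>
      simp only [List.append_nil] at ha
      simp only [List.nil_append, List.cons.injEq] at hb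
      refine ⟨r2, s1, t2, i1, j2, ?_, by rw [hu1, ha], hw2⟩
      rw [← hb.1] at hij1
      exact lt_trans hij2 hij1
    | cons b a =>
      simp only [List.cons_append, List.cons.injEq] at hb
      exact ⟨r2, a ++ i1 :: s1, t2, i2, j2, hij2, by
        rw [hu1, ha, ← hb.1]; simp, hw2⟩

theorem LGt.asymm {u v : List α} (h1 : LGt u v) (h2 : LGt v u) : False :=
  lgt_irrefl u (h1.trans h2)

/-- Key case analysis: if `u` beats `x ++ y` then either `u` beats `x`, or
`x` is a prefix of `u` and the remainder beats `y`. -/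
theorem LGt.append_case_right {u x y : List α} (h : LGt u (x ++ y)) :
    LGt u x ∨ ∃ u', u = x ++ u' ∧ LGt u' y := by
  obtain ⟨r, s, t, i, j, hij, hu, hv⟩ := h
  rcases List.append_eq_append_iff.1 hv with ⟨a, ha, hb⟩ | ⟨a, ha, hb⟩
  · -- r = x ++ a, y = a ++ j :: t
    exact Or.inr ⟨a ++ i :: s, by rw [hu, ha]; simp, a, s, t, i, j, hij, rfl, hb⟩
  · -- x = r ++ a, j :: t = a ++ y
    cases a with
    | nil =>
      simp only [List.append_nil] at ha
      simp only [List.nil_append] at hb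
      exact Or.inr ⟨i :: s, by rw [hu, ha], [], s, t, i, j, hij, rfl, hb.symm⟩
    | cons b a =>
      simp only [List.cons_append, List.cons.injEq] at hb
      refine Or.inl ⟨r, s, a, i, b, ?_, hu, by rw [ha]⟩
      rw [← hb.1]; exact hij

/-- Mirror case analysis on the first argument. -/
theorem LGt.append_case_left {u x y : List α} (h : LGt (x ++ y) u) :
    LGt x u ∨ ∃ u', u = x ++ u' ∧ LGt y u' := by
  obtain ⟨r, s, t, i, j, hij, hu, hv⟩ := h
  rcases List.append_eq_append_iff.1 hu with ⟨a, ha, hb⟩ | ⟨a, ha, hb⟩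
  · exact Or.inr ⟨a ++ j :: t, by rw [hv, ha]; simp, a, s, t, i, j, hij, hb, rfl⟩
  · cases a with
    | nil =>
      simp only [List.append_nil] at ha
      simp only [List.nil_append] at hb
      exact Or.inr ⟨j :: t, by rw [hv, ha], [], s, t, i, j, hij, hb.symm, rfl⟩
    | cons b a =>
      simp only [List.cons_append, List.cons.injEq] at hb
      refine Or.inl ⟨r, a, t, b, j, ?_, by rw [ha], hv⟩
      rw [← hb.1]; exact hij

theorem lgt_trichotomy (u v : List α) : LGt u v ∨ LGt v u ∨ u <+: v ∨ v <+: u := by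
  induction u generalizing v with
  | nil => exact Or.inr (Or.inr (Or.inl (List.nil_prefix)))
  | cons a u ih =>
    cases v with
    | nil => exact Or.inr (Or.inr (Or.inr (List.nil_prefix)))
    | cons b v =>
      rcases lt_trichotomy a b with h | h | h
      · exact Or.inr (Or.inl ⟨[], v, u, b, a, h, rfl, rfl⟩)
      · subst h
        rcases ih v with h | h | h | h
        · exact Or.inl (h.append_left [a])
        · exact Or.inr (Or.inl (h.append_left [a]))
        · exact Or.inr (Or.inr (Or.inl (List.cons_prefix_cons.2 ⟨rfl, h⟩)))
        · exact Or.inr (Or.inr (Or.inr (List.cons_prefix_cons.2 ⟨rfl, h⟩)))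
      · exact Or.inl ⟨[], u, v, a, b, h, rfl, rfl⟩

/-- plex-greater: `u` is greater than its strict extensions, otherwise lex. -/
def PGt (u v : List α) : Prop := (∃ w : List α, w ≠ [] ∧ v = u ++ w) ∨ LGt u v

def PLe (u v : List α) : Prop := u = v ∨ PGt v u

theorem pgt_irrefl (u : List α) : ¬ PGt u u := by
  rintro (⟨w, hw, hv⟩ | h)
  · exact hw (by simpa using hv.symm)
  · exact lgt_irrefl u h

theorem PGt.trans {u v w : List α} (h1 : PGt u v) (h2 : PGt v w) : PGt u w := by
  rcases h1 with ⟨a, ha, rfl⟩ | h1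
  · rcases h2 with ⟨b, hb, rfl⟩ | h2
    · exact Or.inl ⟨a ++ b, by simp [ha], by simp⟩
    · -- LGt (u ++ a) w
      rcases h2.append_case_left with h | ⟨w', rfl, h⟩
      · exact Or.inr h
      · rcases eq_or_ne w' [] with rfl | hne
        · exact absurd h (lgt_nil_right a)
        · exact Or.inl ⟨w', hne, rfl⟩
  · rcases h2 with ⟨b, hb, rfl⟩ | h2
    · exact Or.inr (h1.append_snd b)
    · exact Or.inr (h1.trans h2)

theorem PGt.asymm {u v : List α} (h1 : PGt u v) (h2 : PGt v u) : False :=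
  pgt_irrefl u (h1.trans h2)

theorem pgt_trichotomy (u v : List α) : u = v ∨ PGt u v ∨ PGt v u := by
  rcases lgt_trichotomy u v with h | h | h | h
  · exact Or.inr (Or.inl (Or.inr h))
  · exact Or.inr (Or.inr (Or.inr h))
  · rcases h with ⟨c, rfl⟩
    rcases eq_or_ne c [] with rfl | hc
    · exact Or.inl (by simp)
    · exact Or.inr (Or.inl (Or.inl ⟨c, hc, rfl⟩))
  · rcases h with ⟨c, rfl⟩
    rcases eq_or_ne c [] with rfl | hc
    · exact Or.inl (by simp)
    · exact Or.inr (Or.inr (Or.inl ⟨c, hc, rfl⟩))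

theorem ple_total (u v : List α) : PLe u v ∨ PLe v u := by
  rcases pgt_trichotomy u v with h | h | h
  · exact Or.inl (Or.inl h)
  · exact Or.inr (Or.inr h)
  · exact Or.inl (Or.inr h)

theorem PLe.trans {u v w : List α} (h1 : PLe u v) (h2 : PLe v w) : PLe u w := by
  rcases h1 with rfl | h1
  · exact h2
  · rcases h2 with rfl | h2
    · exact Or.inr h1
    · exact Or.inr (h2.trans h1)

theorem PLe.antisymm {u v : List α} (h1 : PLe u v) (h2 : PLe v u) : u = v := by
  rcases h1 with rfl | h1
  · rfl
  · rcases h2 with rfl | h2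
    · rfl
    · exact absurd (h1.trans h2) (pgt_irrefl v)

instance : IsTrans (List α) (PLe (α := α)) := ⟨fun _ _ _ => PLe.trans⟩
instance : IsAntisymm (List α) (PLe (α := α)) := ⟨fun _ _ => PLe.antisymm⟩

theorem pgt_of_not_ple {u v : List α} (h : ¬ PLe u v) : PGt u v := by
  rcases pgt_trichotomy u v with rfl | h1 | h1
  · exact absurd (Or.inl rfl) h
  · exact h1
  · exact absurd (Or.inr h1) h

/-- anti-Lyndon via suffixes : `u` lex-beats each proper nonempty suffix. -/
def AL (u : List α) : Prop :=
  u ≠ [] ∧ ∀ s : List α, s ≠ [] → s.length < u.length → s <:+ u → LGt u s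

/-- anti-Lyndon via rotations. -/
def ALrot (u : List α) : Prop :=
  u ≠ [] ∧ ∀ v w : List α, v ≠ [] → w ≠ [] → u = v ++ w → LGt u (w ++ v)

theorem AL.alrot {u : List α} (h : AL u) : ALrot u := by
  refine ⟨h.1, fun v w hv hw huvw => ?_⟩
  have hs : LGt u w := by
    refine h.2 w hw ?_ ⟨v, huvw.symm⟩
    rw [huvw, List.length_append]
    have := List.length_pos_iff.2 hv
    omega
  exact hs.append_snd v

theorem ALrot.al {u : List α} (h : ALrot u) : AL u := by
  refine ⟨h.1, fun s hs hlen hsuf => ?_⟩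
  obtain ⟨a, ha⟩ := hsuf
  have hane : a ≠ [] := by
    rintro rfl
    simp only [List.nil_append] at ha
    rw [ha] at hlen; omega
  have hrot : LGt u (s ++ a) := h.2 a s hane hs ha.symm
  rcases hrot.append_case_right with h1 | ⟨u', huu, h1⟩
  · exact h1
  · -- u = s ++ u' : s is also a prefix of u : border situation
    exfalso
    have hune : u' ≠ [] := by rintro rfl; exact lgt_nil_left a h1
    have h2 : LGt (s ++ u') (s ++ a) := huu ▸ hrot
    have h3 : LGt u' a := h2.of_append_left
    have h4 : LGt u (u' ++ s) := h.2 s u' hs hune huu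
    have h5 : LGt (a ++ s) (u' ++ s) := ha ▸ h4
    exact (h3.append_both s s).asymm h5

theorem al_singleton (a : α) : AL [a] := by
  refine ⟨by simp, fun s hs hlen _ => ?_⟩
  exfalso
  have h1 := List.length_pos_iff.2 hs
  simp only [List.length_singleton] at hlen
  omega

theorem suffix_append_cases {s u v : List α} (h : s <:+ u ++ v) :
    s <:+ v ∨ ∃ s', s = s' ++ v ∧ s' <:+ u := by
  obtain ⟨a, ha⟩ := h
  rcases List.append_eq_append_iff.1 ha with ⟨b, hb, hc⟩ | ⟨b, hb, hc⟩
  · exact Or.inr ⟨b, hc, ⟨a, hb.symm⟩⟩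
  · exact Or.inl ⟨b, hc.symm⟩

/-- merge lemma: concatenation of plex-decreasing anti-Lyndon words is anti-Lyndon. -/
theorem AL.merge {u v : List α} (hu : AL u) (hv : AL v) (h : PGt u v) : AL (u ++ v) := by
  have hune := hu.1; have hvne := hv.1
  have hlenu := List.length_pos_iff.2 hune
  have hlenv := List.length_pos_iff.2 hvne
  have key : LGt (u ++ v) v := by
    rcases h with ⟨w, hw, rfl⟩ | h1
    · -- v = u ++ w
      have h2 : LGt (u ++ w) w := hv.2 w hw (by simp [hlenu]) ⟨u, rfl⟩
      have := h2.append_left u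
      simpa using this
    · exact h1.append_fst v
  refine ⟨by simp [hune], fun s hs hlen hsuf => ?_⟩
  rcases suffix_append_cases hsuf with hsv | ⟨s', rfl, hs'⟩
  · -- s is a suffix of v
    rcases eq_or_lt_of_le (List.IsSuffix.length_le hsv) with heq | hlt
    · rw [List.IsSuffix.eq_of_length hsv heq]
      exact key
    · have h2 : LGt v s := hv.2 s hs hlt hsv
      rcases h with ⟨w, hw, hveq⟩ | h1
      · -- v = u ++ w
        rw [hveq] at h2
        rcases h2.append_case_left with h3 | ⟨s'', rfl, h3⟩
        · exact h3.append_fst v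
        · have hs'' : s'' ≠ [] := by rintro rfl; exact lgt_nil_right w h3
          have hsufv : s'' <:+ v := by
            have h4 : s'' <:+ u ++ s'' := ⟨u, rfl⟩
            exact h4.trans hsv
          have hlt'' : s''.length < v.length := by
            have := hsv.length_le
            simp only [List.length_append] at this hlt ⊢
            omega
          exact (hv.2 s'' hs'' hlt'' hsufv).append_left u
      · exact (h1.trans h2).append_fst v
  · -- s = s' ++ v with s' a suffix of u
    rcases eq_or_ne s' [] with rfl | hs'ne
    · simpa using key
    · have hlt : s'.length < u.length := by
        simp only [List.length_append] at hlen
        omega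
      exact (hu.2 s' hs'ne hlt hs').append_both v v

end WordC

namespace WordC
variable {α : Type} [LinearOrder α]

theorem exists_chain_violation {β : Type*} {R : β → β → Prop} :
    ∀ {L : List β}, ¬ L.Chain' R → ∃ A x y B, L = A ++ x :: y :: B ∧ ¬ R x y := by
  intro L
  induction L with
  | nil => intro h; exact absurd List.isChain_nil h
  | cons a L ih =>
    intro h
    cases L with
    | nil => exact absurd (List.isChain_singleton a) h
    | cons b L =>
      rw [List.Chain', List.isChain_cons_cons] at h
      push_neg at h
      by_cases hab : R a b
      · obtain ⟨A, x, y, B, hsplit, hxy⟩ := ih (h hab)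
        exact ⟨a :: A, x, y, B, by rw [hsplit]; rfl, hxy⟩
      · exact ⟨[], a, b, L, rfl, hab⟩

theorem exists_sorted_merge :
    ∀ (n : ℕ) (L : List (List α)), L.length ≤ n → (∀ l ∈ L, AL l) →
    ∃ M : List (List α), (∀ l ∈ M, AL l) ∧ M.Chain' PLe ∧ M.flatten = L.flatten := by
  intro n
  induction n with
  | zero =>
    intro L hlen _
    rw [Nat.le_zero, List.length_eq_zero_iff] at hlen
    subst hlen
    exact ⟨[], by simp, List.isChain_nil, by simp⟩
  | succ n ih =>
    intro L hlen hAL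
    by_cases hc : L.Chain' PLe
    · exact ⟨L, hAL, hc, rfl⟩
    · obtain ⟨A, x, y, B, hsplit, hxy⟩ := exists_chain_violation hc
      have hx : AL x := hAL x (by rw [hsplit]; simp)
      have hy : AL y := hAL y (by rw [hsplit]; simp)
      have hxy' : PGt x y := pgt_of_not_ple hxy
      have hmerge : AL (x ++ y) := hx.merge hy hxy'
      obtain ⟨M, hM1, hM2, hM3⟩ := ih (A ++ (x ++ y) :: B)
        (by rw [hsplit] at hlen; simp at hlen ⊢; omega)
        (by
          intro l hl
          rcases List.mem_append.1 hl with h | h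
          · exact hAL l (by rw [hsplit]; exact List.mem_append_left _ h)
          · rcases List.mem_cons.1 h with rfl | h
            · exact hmerge
            · exact hAL l (by rw [hsplit]; simp [h]))
      exact ⟨M, hM1, hM2, by rw [hM3, hsplit]; simp⟩

omit [LinearOrder α] in
theorem flatten_map_singleton (w : List α) : (w.map (fun a => [a])).flatten = w := by
  induction w with
  | nil => rfl
  | cons a w ihw => simp [ihw]

theorem exists_cfl (w : List α) :
    ∃ L : List (List α), (∀ l ∈ L, AL l) ∧ L.Chain' PLe ∧ L.flatten = w := by
  obtain ⟨M, h1, h2, h3⟩ := exists_sorted_merge (w.map (fun a => [a])).length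
    (w.map (fun a => [a])) le_rfl (by
      intro l hl
      obtain ⟨a, _, rfl⟩ := List.mem_map.1 hl
      exact al_singleton a)
  exact ⟨M, h1, h2, by rw [h3, flatten_map_singleton]⟩

omit [LinearOrder α] in
theorem prefix_flatten_cases :
    ∀ (L : List (List α)) (m : List α), m <+: L.flatten → m ≠ [] →
    (∃ L₁ L₂, L = L₁ ++ L₂ ∧ L₁ ≠ [] ∧ m = L₁.flatten) ∨
    (∃ L₁ x L₂ p, L = L₁ ++ x :: L₂ ∧ p ≠ [] ∧ p.length < x.length ∧ p <+: x ∧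
      m = L₁.flatten ++ p) := by
  intro L
  induction L with
  | nil =>
    intro m hm hne
    exact absurd (List.prefix_nil.1 (by simpa using hm)) hne
  | cons x L ih =>
    intro m hm hne
    obtain ⟨z, hz⟩ := hm
    simp only [List.flatten_cons] at hz
    rcases List.append_eq_append_iff.1 hz with ⟨a, ha, hb⟩ | ⟨c, hc, hd⟩
    · -- x = m ++ a, z = a ++ flatten L
      rcases eq_or_ne a [] with rfl | hane
      · simp only [List.append_nil] at ha
        exact Or.inl ⟨[x], L, rfl, by simp, by simp [ha]⟩
      · refine Or.inr ⟨[], x, L, m, rfl, hne, ?_, ⟨a, ha.symm⟩, by simp⟩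
        rw [ha, List.length_append]
        have := List.length_pos_iff.2 hane
        omega
    · -- m = x ++ c, flatten L = c ++ z
      rcases eq_or_ne c [] with rfl | hcne
      · simp only [List.append_nil] at hc
        exact Or.inl ⟨[x], L, rfl, by simp, by simp [hc]⟩
      · rcases ih c ⟨z, hd.symm⟩ hcne with ⟨L₁, L₂, hs, hn, he⟩ | ⟨L₁, y, L₂, p, hs, h1, h2, h3, h4⟩
        · exact Or.inl ⟨x :: L₁, L₂, by rw [hs]; rfl, by simp, by simp [hc, he]⟩
        · exact Or.inr ⟨x :: L₁, y, L₂, p, by rw [hs]; rfl, h1, h2, h3, by simp [hc, h4]⟩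

theorem flatten_ne_nil_of_head {l : List α} {L : List (List α)} (hl : l ≠ []) :
    (l :: L).flatten ≠ [] := by
  simp only [List.flatten_cons, ne_eq, List.append_eq_nil_iff]
  tauto

/-- the first-factor-length contradiction for uniqueness. -/
theorem firstlen {l m : List α} {L M : List (List α)}
    (hl : AL l) (hL : ∀ x ∈ L, AL x) (hcl : (l :: L).Chain' PLe)
    (hm : AL m)
    (hflat : (l :: L).flatten = (m :: M).flatten) (hlen : l.length < m.length) : False := by
  have hpw : (l :: L).Pairwise PLe := List.isChain_iff_pairwise.1 hcl
  have hall : ∀ z ∈ L, PLe l z := (List.pairwise_cons.1 hpw).1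
  have hlne := hl.1
  have hlpos := List.length_pos_iff.2 hlne
  have hmpre : m <+: (l :: L).flatten := by
    rw [hflat]; exact ⟨M.flatten, by simp⟩
  rcases prefix_flatten_cases _ m hmpre hm.1 with
    ⟨L₁, L₂, hs, hn, he⟩ | ⟨L₁, x, L₂, p, hs, h1, h2, h3, h4⟩
  · -- m = flatten L₁, L₁ nonempty prefix of l :: L
    cases L₁ with
    | nil => exact hn rfl
    | cons a L₁' =>
      simp only [List.cons_append, List.cons.injEq] at hs
      obtain ⟨rfl, hLeq⟩ := hs
      cases L₁' with
      | nil =>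
        simp only [List.flatten_cons, List.flatten_nil, List.append_nil] at he
        rw [he] at hlen; omega
      | cons b L₁'' =>
        set L₁' := b :: L₁'' with hL₁'
        have hL₁'ne : L₁' ≠ [] := by simp [hL₁']
        set z := L₁'.getLast hL₁'ne with hzdef
        have hzmem : z ∈ L := by
          rw [hLeq]
          exact List.mem_append_left _ (List.getLast_mem hL₁'ne)
        have hzal : AL z := hL z hzmem
        have hflsplit : L₁'.flatten = L₁'.dropLast.flatten ++ z := by
          conv_lhs => rw [← List.dropLast_append_getLast hL₁'ne]
          simp [hzdef]
        have hme : m = l ++ L₁'.flatten := by simpa using he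
        have hzsuf : z <:+ m := by
          rw [hme, hflsplit, ← List.append_assoc]
          exact ⟨_, rfl⟩
        have hzlen : z.length < m.length := by
          have h6 : z.length ≤ L₁'.flatten.length := by
            rw [hflsplit]; simp
          rw [hme, List.length_append]
          omega
        have hmz : PGt m z := Or.inr (hm.2 z hzal.1 hzlen hzsuf)
        have hlm : PGt l m := by
          refine Or.inl ⟨L₁'.flatten, ?_, hme⟩
          intro hnil
          rw [hme, hnil, List.append_nil] at hlen; omega
        rcases hall z hzmem with heq | hgt
        · exact pgt_irrefl l (heq ▸ (hlm.trans hmz))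
        · exact hgt.asymm (hlm.trans hmz)
  · -- m = flatten L₁ ++ p, p proper nonempty prefix of x
    cases L₁ with
    | nil =>
      simp only [List.nil_append, List.cons.injEq] at hs
      obtain ⟨rfl, _⟩ := hs
      simp only [List.flatten_nil, List.nil_append] at h4
      rw [h4] at hlen; omega
    | cons a L₁' =>
      simp only [List.cons_append, List.cons.injEq] at hs
      obtain ⟨rfl, hLeq⟩ := hs
      have hxmem : x ∈ L := by rw [hLeq]; simp
      have hme : m = l ++ (L₁'.flatten ++ p) := by simpa using h4
      have hppsuf : p <:+ m := by
        rw [hme, ← List.append_assoc]; exact ⟨_, rfl⟩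
      have hplen : p.length < m.length := by
        rw [hme]; simp only [List.length_append]; omega
      have hmp : PGt m p := Or.inr (hm.2 p h1 hplen hppsuf)
      have hpx : PGt p x := by
        obtain ⟨w, hw⟩ := h3
        refine Or.inl ⟨w, ?_, hw.symm⟩
        intro hnil
        rw [hnil, List.append_nil] at hw
        rw [hw] at h2; omega
      have hlm : PGt l m := by
        refine Or.inl ⟨L₁'.flatten ++ p, ?_, hme⟩
        simp [h1]
      rcases hall x hxmem with heq | hgt
      · exact pgt_irrefl l (heq ▸ ((hlm.trans hmp).trans hpx))
      · exact hgt.asymm ((hlm.trans hmp).trans hpx)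

theorem sorted_factorization_unique :
    ∀ (L M : List (List α)), (∀ x ∈ L, AL x) → L.Chain' PLe →
      (∀ x ∈ M, AL x) → M.Chain' PLe → L.flatten = M.flatten → L = M := by
  intro L
  induction L with
  | nil =>
    intro M _ _ hM _ hflat
    cases M with
    | nil => rfl
    | cons m M' =>
      exfalso
      exact flatten_ne_nil_of_head (hM m (by simp)).1 (by rw [← hflat]; rfl)
  | cons l L' ih =>
    intro M hL hcl hM hcm hflat
    cases M with
    | nil =>
      exfalso
      exact flatten_ne_nil_of_head (hL l (by simp)).1 (by rw [hflat]; rfl)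
    | cons m M' =>
      have hLtail : ∀ x ∈ L', AL x := fun x hx => hL x (by simp [hx])
      have hMtail : ∀ x ∈ M', AL x := fun x hx => hM x (by simp [hx])
      have hlm : l = m := by
        rcases lt_trichotomy l.length m.length with h | h | h
        · exact absurd (firstlen (hL l (by simp)) hLtail hcl (hM m (by simp)) hflat h) id
        · have hlpre : l <+: (l :: L').flatten := ⟨L'.flatten, by simp⟩
          have hmpre : m <+: (l :: L').flatten := by rw [hflat]; exact ⟨M'.flatten, by simp⟩
          exact (List.prefix_of_prefix_length_le hlpre hmpre (by omega)).eq_of_length h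
        · exact absurd (firstlen (hM m (by simp)) hMtail hcm (hL l (by simp)) hflat.symm h) id
      subst hlm
      have htail : L'.flatten = M'.flatten := by
        have h7 := hflat
        simp only [List.flatten_cons] at h7
        exact List.append_cancel_left h7
      rw [ih M' hLtail hcl.tail hMtail hcm.tail htail]

/-- the span lemma. -/
theorem span_lemma :
    ∀ (M : List (List α)) (v : List α), AL v → (∀ m ∈ M, AL m ∧ PGt m v) →
      ∀ t, t ≠ [] → t <+: M.flatten → LGt v t → False := by
  intro M
  induction M with
  | nil =>
    intro v _ _ t htne ht _
    exact htne (List.prefix_nil.1 (by simpa using ht))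
  | cons x M ih =>
    intro v hv hM t htne ht hvt
    obtain ⟨z, hz⟩ := ht
    simp only [List.flatten_cons] at hz
    have hxal := (hM x (by simp)).1
    have hxv : PGt x v := (hM x (by simp)).2
    rcases List.append_eq_append_iff.1 hz with ⟨a, ha, hb⟩ | ⟨c, hc, hd⟩
    · -- x = t ++ a, z = a ++ M.flatten
      rcases eq_or_ne a [] with rfl | hane
      · rw [List.append_nil] at ha
        exact hxv.asymm (Or.inr (ha ▸ hvt))
      · have htx : PGt t x := Or.inl ⟨a, hane, ha⟩
        exact pgt_irrefl v ((PGt.trans (PGt.trans (Or.inr hvt) htx)) hxv)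
    · -- t = x ++ c, M.flatten = c ++ z
      rw [hc] at hvt
      rcases hvt.append_case_right with h1 | ⟨v', hv', h1⟩
      · exact hxv.asymm (Or.inr h1)
      · have hcne : c ≠ [] := by rintro rfl; exact lgt_nil_right v' h1
        have hv'ne : v' ≠ [] := by rintro rfl; exact lgt_nil_left c h1
        have hv'suf : v' <:+ v := by rw [hv']; exact ⟨x, rfl⟩
        have hv'len : v'.length < v.length := by
          rw [hv', List.length_append]
          have := List.length_pos_iff.2 hxal.1
          omega
        have hvv' : LGt v v' := hv.2 v' hv'ne hv'len hv'suf
        exact ih v hv (fun m hm => hM m (by simp [hm])) c hcne ⟨z, hd.symm⟩ (hvv'.trans h1)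

omit [LinearOrder α] in
theorem factor_flatten_cases :
    ∀ (L : List (List α)) (v : List α), v ≠ [] → (∃ w₁ w₂ : List α, w₁ ++ v ++ w₂ = L.flatten) →
    (∃ l ∈ L, ∃ w₁ w₂ : List α, w₁ ++ v ++ w₂ = l) ∨
    (∃ L₁ x L₂ s t, L = L₁ ++ x :: L₂ ∧ s ≠ [] ∧ t ≠ [] ∧ s <:+ x ∧ t <+: L₂.flatten ∧
      v = s ++ t) := by
  intro L
  induction L with
  | nil =>
    intro v hvne ⟨w₁, w₂, hw⟩
    exfalso
    simp only [List.flatten_nil, List.append_eq_nil_iff] at hw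
    exact hvne hw.1.2
  | cons x L ih =>
    intro v hvne ⟨w₁, w₂, hw⟩
    rw [List.append_assoc, List.flatten_cons] at hw
    rcases List.append_eq_append_iff.1 hw with ⟨a, ha, hb⟩ | ⟨c, hc, hd⟩
    · -- x = w₁ ++ a, a ++ L.flatten = v ++ w₂  (hb : v ++ w₂ = a ++ L.flatten)
      rcases List.append_eq_append_iff.1 hb with ⟨b, hb1, hb2⟩ | ⟨t, ht1, ht2⟩
      · -- a = v ++ b
        exact Or.inl ⟨x, by simp, w₁, b, by rw [ha, hb1, List.append_assoc]⟩
      · -- v = a ++ t, L.flatten = t ++ w₂ (ht2 : w₂?) careful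
        rcases eq_or_ne t [] with rfl | htne
        · rw [List.append_nil] at ht1
          exact Or.inl ⟨x, by simp, w₁, [], by rw [ha, ht1, List.append_nil]⟩
        · rcases eq_or_ne a [] with rfl | hane
          · rw [List.nil_append] at ht1
            subst ht1
            rcases ih v hvne ⟨[], w₂, by rw [List.nil_append]; exact ht2.symm⟩ with
              ⟨l, hl, hfac⟩ | ⟨L₁, y, L₂, s, t', hsplit, hs1, hs2, hs3, hs4, hs5⟩
            · exact Or.inl ⟨l, by simp [hl], hfac⟩
            · exact Or.inr ⟨x :: L₁, y, L₂, s, t', by rw [hsplit]; rfl, hs1, hs2, hs3, hs4, hs5⟩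
          · exact Or.inr ⟨[], x, L, a, t, rfl, hane, htne, ⟨w₁, ha.symm⟩,
              ⟨w₂, ht2.symm⟩, ht1⟩
    · -- w₁ = x ++ c, L.flatten = c ++ (v ++ w₂)
      rcases ih v hvne ⟨c, w₂, by rw [hd, List.append_assoc]⟩ with
        ⟨l, hl, hfac⟩ | ⟨L₁, y, L₂, s, t', hsplit, hs1, hs2, hs3, hs4, hs5⟩
      · exact Or.inl ⟨l, by simp [hl], hfac⟩
      · exact Or.inr ⟨x :: L₁, y, L₂, s, t', by rw [hsplit]; rfl, hs1, hs2, hs3, hs4, hs5⟩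

/-- anti-Lyndon factors of a sorted factorization are factors of a single term. -/
theorem al_factor_of_flatten {L : List (List α)} (hAL : ∀ x ∈ L, AL x) (hch : L.Chain' PLe)
    {v : List α} (hv : AL v) (hfac : ∃ w₁ w₂ : List α, w₁ ++ v ++ w₂ = L.flatten) :
    ∃ l ∈ L, ∃ w₁ w₂ : List α, w₁ ++ v ++ w₂ = l := by
  rcases factor_flatten_cases L v hv.1 hfac with h | ⟨L₁, x, L₂, s, t, hsplit, hs, ht, hssuf, htpre, hvst⟩
  · exact h
  · exfalso
    have hpw : L.Pairwise PLe := List.isChain_iff_pairwise.1 hch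
    rw [hsplit] at hpw
    have hxel : ∀ m ∈ L₂, PLe x m := (List.pairwise_cons.1 (List.pairwise_append.1 hpw).2.1).1
    have hxal : AL x := hAL x (by rw [hsplit]; simp)
    -- v lex-beats its proper suffix t
    have hvt : LGt v t := by
      refine hv.2 t ht ?_ ⟨s, hvst.symm⟩
      rw [hvst, List.length_append]
      have := List.length_pos_iff.2 hs
      omega
    -- s <plex v since v = s ++ t
    have hsv : PGt s v := Or.inl ⟨t, ht, hvst⟩
    -- x >=plex s
    have hxv : PGt x v := by
      rcases eq_or_lt_of_le hssuf.length_le with heq | hlt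
      · rw [← hssuf.eq_of_length heq]; exact hsv
      · exact PGt.trans (Or.inr (hxal.2 s hs hlt hssuf)) hsv
    refine span_lemma L₂ v hv (fun m hm => ⟨hAL m (by rw [hsplit]; simp [hm]), ?_⟩) t ht htpre hvt
    rcases hxel m hm with heq | hgt
    · exact heq ▸ hxv
    · exact hgt.trans hxv

theorem factor_of_mem_flatten {L : List (List α)} {l : List α} (hl : l ∈ L) :
    ∃ w₁ w₂ : List α, w₁ ++ l ++ w₂ = L.flatten := by
  obtain ⟨s, t, rfl⟩ := List.append_of_mem hl
  exact ⟨s.flatten, t.flatten, by simp⟩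

end WordC
namespace BR
open NC NC2 NC4 WordC

variable {N : ℕ}

theorem toList_inj : Function.Injective (FreeMonoid.toList (α := Fin N)) :=
  FreeMonoid.toList.injective

theorem toList_eq_nil_iff {u : FreeMonoid (Fin N)} : u.toList = [] ↔ u = 1 := by
  constructor
  · intro h; apply toList_inj; rw [h]; rfl
  · rintro rfl; rfl

theorem lexGt_iff (u v : FreeMonoid (Fin N)) : LexGt u v ↔ LGt u.toList v.toList := by
  constructor
  · rintro ⟨r, s, t, i, j, hij, rfl, rfl⟩
    exact ⟨r.toList, s.toList, t.toList, i, j, hij, by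
      simp [FreeMonoid.toList_mul, FreeMonoid.toList_of], by
      simp [FreeMonoid.toList_mul, FreeMonoid.toList_of]⟩
  · rintro ⟨r, s, t, i, j, hij, hu, hv⟩
    refine ⟨FreeMonoid.ofList r, FreeMonoid.ofList s, FreeMonoid.ofList t, i, j, hij,
      toList_inj ?_, toList_inj ?_⟩
    · rw [hu]; simp [FreeMonoid.toList_mul, FreeMonoid.toList_of]
    · rw [hv]; simp [FreeMonoid.toList_mul, FreeMonoid.toList_of]

theorem plexGt_iff (u v : FreeMonoid (Fin N)) : PlexGt u v ↔ PGt u.toList v.toList := by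
  unfold PlexGt PGt
  rw [lexGt_iff]
  apply or_congr_left
  constructor
  · rintro ⟨w, hw, rfl⟩
    exact ⟨w.toList, fun h => hw (toList_eq_nil_iff.1 h), by simp [FreeMonoid.toList_mul]⟩
  · rintro ⟨w, hw, hveq⟩
    refine ⟨FreeMonoid.ofList w, fun h => hw ?_, toList_inj ?_⟩
    · rw [← FreeMonoid.toList_ofList w, h]; rfl
    · rw [hveq]; simp [FreeMonoid.toList_mul]

theorem plexLe_iff (u v : FreeMonoid (Fin N)) : PlexLe u v ↔ PLe u.toList v.toList := by
  unfold PlexLe PLe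
  rw [plexGt_iff]
  exact or_congr_left ⟨fun h => by rw [h], fun h => toList_inj h⟩

theorem isFactor_iff (u v : FreeMonoid (Fin N)) :
    IsFactor u v ↔ ∃ w₁ w₂ : List (Fin N), w₁ ++ u.toList ++ w₂ = v.toList := by
  constructor
  · rintro ⟨w₁, w₂, rfl⟩
    exact ⟨w₁.toList, w₂.toList, by simp [FreeMonoid.toList_mul]⟩
  · rintro ⟨w₁, w₂, h⟩
    refine ⟨FreeMonoid.ofList w₁, FreeMonoid.ofList w₂, toList_inj ?_⟩
    rw [← h]; simp [FreeMonoid.toList_mul]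

theorem isLyndon_iff (u : FreeMonoid (Fin N)) : IsLyndon u ↔ AL u.toList := by
  constructor
  · intro ⟨h1, h2⟩
    refine ALrot.al ⟨fun h => h1 (toList_eq_nil_iff.1 h), fun v w hv hw huvw => ?_⟩
    have := h2 (FreeMonoid.ofList v) (FreeMonoid.ofList w)
      (fun h => hv (by rw [← FreeMonoid.toList_ofList v, h]; rfl))
      (fun h => hw (by rw [← FreeMonoid.toList_ofList w, h]; rfl))
      (toList_inj (by rw [huvw]; simp [FreeMonoid.toList_mul]))
    rw [lexGt_iff] at this
    simpa [FreeMonoid.toList_mul] using this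
  · intro h
    have h' := h.alrot
    refine ⟨fun h1 => h'.1 (by rw [h1]; rfl), fun v w hv hw huvw => ?_⟩
    rw [lexGt_iff]
    have := h'.2 v.toList w.toList (fun hh => hv (toList_eq_nil_iff.1 hh))
      (fun hh => hw (toList_eq_nil_iff.1 hh)) (by rw [huvw]; simp [FreeMonoid.toList_mul])
    simpa [FreeMonoid.toList_mul] using this

instance : IsTrans (FreeMonoid (Fin N)) PlexLe :=
  ⟨fun a b c h1 h2 => (plexLe_iff a c).2 (((plexLe_iff a b).1 h1).trans ((plexLe_iff b c).1 h2))⟩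

instance : IsAntisymm (FreeMonoid (Fin N)) PlexLe :=
  ⟨fun a b h1 h2 => toList_inj (((plexLe_iff a b).1 h1).antisymm ((plexLe_iff b a).1 h2))⟩

theorem plexLe_refl (u : FreeMonoid (Fin N)) : PlexLe u u := Or.inl rfl

theorem toList_prod (l : List (FreeMonoid (Fin N))) :
    (l.prod).toList = (l.map FreeMonoid.toList).flatten := by
  induction l with
  | nil => rfl
  | cons a l ih => simp [FreeMonoid.toList_mul, ih]

/-- `mdeg` as a sum over the word. -/
theorem mdeg_toList (e : Fin N → ℕ) (w : FreeMonoid (Fin N)) :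
    mdeg e w = (w.toList.map e).sum := rfl

theorem mdeg_prod (e : Fin N → ℕ) (l : List (FreeMonoid (Fin N))) :
    mdeg e l.prod = (l.map (mdeg e)).sum := by
  induction l with
  | nil => rfl
  | cons a l ih =>
    rw [List.prod_cons, List.map_cons, List.sum_cons, ← ih]
    show ((a * l.prod).toList.map e).sum = _
    rw [FreeMonoid.toList_mul]
    simp [mdeg_toList]

theorem one_le_mdeg {e : Fin N → ℕ} (he : ∀ x, 0 < e x) {u : FreeMonoid (Fin N)}
    (hu : u ≠ 1) : 1 ≤ mdeg e u := by
  rw [mdeg_toList]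
  cases h : u.toList with
  | nil => exact absurd (toList_eq_nil_iff.1 h) hu
  | cons a l =>
    simp only [List.map_cons, List.sum_cons]
    have := he a
    omega

theorem length_le_sum_map {e : Fin N → ℕ} (he : ∀ x, 0 < e x) :
    ∀ l : List (Fin N), l.length ≤ (l.map e).sum := by
  intro l
  induction l with
  | nil => simp
  | cons a l ih =>
    simp only [List.length_cons, List.map_cons, List.sum_cons]
    have := he a
    omega

theorem length_le_mdeg {e : Fin N → ℕ} (he : ∀ x, 0 < e x) (u : FreeMonoid (Fin N)) :
    u.toList.length ≤ mdeg e u := by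
  rw [mdeg_toList]
  exact length_le_sum_map he _

theorem mdeg_set_finite {e : Fin N → ℕ} (he : ∀ x, 0 < e x) (n : ℕ) :
    {u : FreeMonoid (Fin N) | mdeg e u = n}.Finite := by
  have h1 : {u : FreeMonoid (Fin N) | mdeg e u = n} ⊆
      FreeMonoid.toList ⁻¹' {l : List (Fin N) | l.length ≤ n} := by
    intro u hu
    simp only [Set.mem_preimage, Set.mem_setOf_eq]
    rw [← hu]
    exact length_le_mdeg he u
  exact ((List.finite_length_le (Fin N) n).preimage toList_inj.injOn).subset h1

/-- normality is inherited by factors. -/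
theorem nw_of_factor [LinearOrder (FreeMonoid (Fin N))] {k : Type} [Field k]
    {G : Set (NC.FA k (Fin N))} {u v : FreeMonoid (Fin N)}
    (hv : v ∈ nw G) (huv : IsFactor u v) : u ∈ nw G := by
  intro x hx hfac
  obtain ⟨a, b, rfl⟩ := hfac
  obtain ⟨c, d, rfl⟩ := huv
  exact hv x hx ⟨c * a, b * d, by simp [mul_assoc]⟩

end BR
namespace LA
open NC NC2

variable {k X : Type} [Field k] [LinearOrder (FreeMonoid X)]

theorem lw_mem {f : FA k X} (hf : f ≠ 0) : lw f ∈ f.coeff.support := by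
  obtain ⟨m, hm⟩ := Finset.max_of_nonempty (Finsupp.support_nonempty_iff.2 (fun h => hf (MonoidAlgebra.coeff_injective h)))
  have h1 : lw f = m := by rw [NC.lw, hm]; rfl
  rw [h1]
  exact Finset.mem_of_max hm

theorem le_lw {f : FA k X} {u : FreeMonoid X} (hu : u ∈ f.coeff.support) : u ≤ lw f := by
  have hf : f ≠ 0 := by rintro rfl; simp at hu
  have h1 : (u : WithBot (FreeMonoid X)) ≤ f.coeff.support.max := Finset.le_max hu
  obtain ⟨m, hm⟩ := Finset.max_of_nonempty (Finsupp.support_nonempty_iff.2 (fun h => hf (MonoidAlgebra.coeff_injective h)))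
  have h2 : lw f = m := by rw [NC.lw, hm]; rfl
  rw [hm] at h1
  rw [h2]
  exact_mod_cast h1

theorem mono_single (u : FreeMonoid X) : mono k u = MonoidAlgebra.single u 1 :=
  MonoidAlgebra.of_apply ..

theorem support_mono (u : FreeMonoid X) : (mono k u).coeff.support = {u} := by
  rw [mono_single]
  exact Finsupp.support_single_ne_zero u one_ne_zero

/-- coefficient of `w₁ * w * w₂` in `mono w₁ * g * mono w₂`. -/
theorem q_coeff (g : FA k X) (w₁ w₂ w : FreeMonoid X) :
    (mono k w₁ * g * mono k w₂).coeff (w₁ * w * w₂) = g.coeff w := by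
  have e1 : (mono k w₁ * g * mono k w₂).coeff (w₁ * w * w₂)
      = (mono k w₁ * g).coeff (w₁ * w) * 1 := by
    rw [mono_single w₂]
    exact MonoidAlgebra.coeff_mul_single_eq_coeff_mul (w₁ * w) (fun a _ => mul_left_inj w₂)
  have e2 : (mono k w₁ * g).coeff (w₁ * w) = 1 * g.coeff w := by
    rw [mono_single w₁]
    exact MonoidAlgebra.coeff_single_mul_eq_mul_coeff w (fun a _ => mul_right_inj w₁)
  rw [e1, e2, one_mul, mul_one]

theorem q_support {g : FA k X} (w₁ w₂ : FreeMonoid X) {x : FreeMonoid X}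
    (hx : x ∈ (mono k w₁ * g * mono k w₂).coeff.support) :
    ∃ w ∈ g.coeff.support, x = w₁ * w * w₂ := by
  classical
  have h1 := MonoidAlgebra.support_coeff_mul_subset (mono k w₁ * g) (mono k w₂) hx
  rw [support_mono] at h1
  obtain ⟨y, hy, z, hz, rfl⟩ := Finset.mem_mul.1 h1
  simp only [Finset.mem_singleton] at hz
  subst hz
  have h2 := MonoidAlgebra.support_coeff_mul_subset (mono k w₁) g hy
  rw [support_mono] at h2
  obtain ⟨y', hy', w, hw, rfl⟩ := Finset.mem_mul.1 h2
  simp only [Finset.mem_singleton] at hy'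
  subst hy'
  exact ⟨w, hw, rfl⟩

theorem q_support_le (hadm : IsAdmissible X) {g : FA k X} (hg : g ≠ 0)
    (w₁ w₂ : FreeMonoid X) {x : FreeMonoid X}
    (hx : x ∈ (mono k w₁ * g * mono k w₂).coeff.support) : x ≤ w₁ * lw g * w₂ := by
  obtain ⟨w, hw, rfl⟩ := q_support w₁ w₂ hx
  rcases eq_or_lt_of_le (le_lw hw) with heq | hlt
  · rw [heq]
  · exact le_of_lt (hadm.2.2 w (lw g) w₁ w₂ hlt)

theorem exists_nf (hadm : IsAdmissible X) {𝔞 : Submodule k (FA k X)} (h2s : IsTwoSided 𝔞)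
    {G : Set (FA k X)} (hGa : ∀ g ∈ G, g ∈ 𝔞) (hmon : ∀ g ∈ G, g.coeff (lw g) = 1)
    (f : FA k X) : ∃ h ∈ 𝔞, ∀ u ∈ (f - h).coeff.support, u ∈ nw G := by
  classical
  have wf : WellFounded ((· < ·) : FreeMonoid X → FreeMonoid X → Prop) := hadm.1.wf
  suffices H : ∀ w : FreeMonoid X, ∀ f : FA k X, lw f = w →
      ∃ h ∈ 𝔞, ∀ u ∈ (f - h).coeff.support, u ∈ nw G from H (lw f) f rfl
  intro w
  induction w using WellFounded.induction wf with
  | _ w IH =>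
  intro f hfw
  subst hfw
  by_cases hf0 : f = 0
  · exact ⟨0, Submodule.zero_mem 𝔞, by simp [hf0]⟩
  by_cases hu : lw f ∈ nw G
  · -- strip off the leading (normal) monomial
    set f' := f - f.coeff (lw f) • mono k (lw f) with hf'
    have hf'top : f'.coeff (lw f) = 0 := by
      rw [hf', MonoidAlgebra.coeff_sub, Finsupp.sub_apply, MonoidAlgebra.coeff_smul, Finsupp.smul_apply, mono_single, MonoidAlgebra.coeff_single,
        Finsupp.single_eq_same, smul_eq_mul, mul_one, sub_self]
    have hsupp' : ∀ v ∈ f'.coeff.support, v ∈ f.coeff.support ∧ v ≠ lw f := by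
      intro v hv
      have hvne : f'.coeff v ≠ 0 := Finsupp.mem_support_iff.1 hv
      have hvu : v ≠ lw f := fun h => hvne (h ▸ hf'top)
      refine ⟨Finsupp.mem_support_iff.2 fun h => hvne ?_, hvu⟩
      rw [hf', MonoidAlgebra.coeff_sub, Finsupp.sub_apply, MonoidAlgebra.coeff_smul, Finsupp.smul_apply, mono_single, MonoidAlgebra.coeff_single,
        Finsupp.single_apply, if_neg (fun hh => hvu hh.symm), h]
      simp
    by_cases hf'0 : f' = 0
    · refine ⟨0, Submodule.zero_mem 𝔞, ?_⟩
      intro v hv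
      rw [sub_zero] at hv
      have hfval : f = f.coeff (lw f) • mono k (lw f) := by
        have := hf'0
        rw [hf', sub_eq_zero] at this
        exact this
      rw [hfval] at hv
      have : v ∈ (mono k (lw f)).coeff.support := Finsupp.support_smul hv
      rw [support_mono, Finset.mem_singleton] at this
      rwa [this]
    · have hlt : lw f' < lw f := by
        have hmem := lw_mem hf'0
        obtain ⟨h1, h2⟩ := hsupp' _ hmem
        exact lt_of_le_of_ne (le_lw h1) h2
      obtain ⟨h, hmem, hss⟩ := IH (lw f') hlt f' rfl
      refine ⟨h, hmem, ?_⟩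
      intro v hv
      have heq : f - h = f' - h + f.coeff (lw f) • mono k (lw f) := by
        rw [hf']; abel
      rw [heq] at hv
      rcases Finset.mem_union.1 (Finsupp.support_add hv) with h1 | h1
      · exact hss v h1
      · have : v ∈ (mono k (lw f)).coeff.support := Finsupp.support_smul h1
        rw [support_mono, Finset.mem_singleton] at this
        rwa [this]
  · -- reduce by a Gröbner basis element
    rw [nw, Set.mem_setOf_eq] at hu
    push_neg at hu
    obtain ⟨v, hvlw, hfac⟩ := hu
    obtain ⟨g, hgG, hg0, rfl⟩ := hvlw
    obtain ⟨w₁, w₂, hw⟩ := hfac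
    set q := mono k w₁ * g * mono k w₂ with hq
    have hq𝔞 : q ∈ 𝔞 := by
      rw [hq, mul_assoc]
      exact (h2s (mono k w₁) _ ((h2s (mono k w₂) g (hGa g hgG)).2)).1
    have hq1 : q.coeff (lw f) = 1 := by
      rw [hq, ← hw, q_coeff]
      exact hmon g hgG
    have hqle : ∀ x ∈ q.coeff.support, x ≤ lw f := by
      intro x hx
      rw [← hw]
      exact q_support_le hadm hg0 w₁ w₂ hx
    set f' := f - f.coeff (lw f) • q with hf'
    have hf'top : f'.coeff (lw f) = 0 := by
      rw [hf', MonoidAlgebra.coeff_sub, Finsupp.sub_apply, MonoidAlgebra.coeff_smul, Finsupp.smul_apply, hq1, smul_eq_mul, mul_one, sub_self]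
    have hsupp' : ∀ x ∈ f'.coeff.support, x ≤ lw f ∧ x ≠ lw f := by
      intro x hx
      have hxne : f'.coeff x ≠ 0 := Finsupp.mem_support_iff.1 hx
      have hxu : x ≠ lw f := fun h => hxne (h ▸ hf'top)
      refine ⟨?_, hxu⟩
      rcases Finset.mem_union.1 (Finsupp.support_sub hx) with h1 | h1
      · exact le_lw h1
      · exact hqle x (Finsupp.support_smul h1)
    by_cases hf'0 : f' = 0
    · refine ⟨f.coeff (lw f) • q, Submodule.smul_mem 𝔞 _ hq𝔞, ?_⟩
      intro v hv
      rw [show f - f.coeff (lw f) • q = f' from hf'.symm, hf'0] at hv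
      simp at hv
    · have hlt : lw f' < lw f := by
        have hmem := lw_mem hf'0
        obtain ⟨h1, h2⟩ := hsupp' _ hmem
        exact lt_of_le_of_ne h1 h2
      obtain ⟨h, hmem, hss⟩ := IH (lw f') hlt f' rfl
      refine ⟨h + f.coeff (lw f) • q, Submodule.add_mem 𝔞 hmem (Submodule.smul_mem 𝔞 _ hq𝔞), ?_⟩
      intro v hv
      have heq : f - (h + f.coeff (lw f) • q) = f' - h := by rw [hf']; abel
      rw [heq] at hv
      exact hss v hv

end LA
namespace LA
open NC NC2

variable {k X : Type} [Field k] [LinearOrder (FreeMonoid X)]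

theorem homComp_apply {σ : Type} [AddCommMonoid σ] (e : X → σ) (α : σ) (f : FA k X)
    (v : FreeMonoid X) [Decidable (mdeg e v = α)] :
    (homComp e α f).coeff v = if mdeg e v = α then f.coeff v else 0 := by
  classical
  rw [NC2.homComp, MonoidAlgebra.coeff_ofCoeff, Finsupp.filter_apply]
  split_ifs <;> rfl

theorem homComp_sub {σ : Type} [AddCommMonoid σ] (e : X → σ) (α : σ) (f g : FA k X) :
    homComp e α (f - g) = homComp e α f - homComp e α g := by
  classical
  ext v
  rw [MonoidAlgebra.coeff_sub, Finsupp.sub_apply, homComp_apply, homComp_apply, homComp_apply,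
    MonoidAlgebra.coeff_sub, Finsupp.sub_apply]
  split_ifs <;> simp

theorem homComp_mono {σ : Type} [AddCommMonoid σ] (e : X → σ) {α : σ} {u : FreeMonoid X}
    (hu : mdeg e u = α) : homComp e α (mono k u) = mono k u := by
  classical
  ext v
  rw [homComp_apply]
  split_ifs with h
  · rfl
  · rw [mono_single]
    exact (Finsupp.single_eq_of_ne' (fun hh => h (by rw [← hh]; exact hu))).symm

theorem mem_support_homComp {σ : Type} [AddCommMonoid σ] (e : X → σ) (α : σ) (f : FA k X)
    (v : FreeMonoid X) :
    v ∈ (homComp e α f).coeff.support ↔ v ∈ f.coeff.support ∧ mdeg e v = α := by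
  classical
  by_cases h : mdeg e v = α <;>
    simp [Finsupp.mem_support_iff, homComp_apply, h]

theorem hilb_eq_ncard (hadm : IsAdmissible X) (e : X → ℕ) {𝔞 : Submodule k (FA k X)}
    (hh : IsHomogIdeal e 𝔞) {G : Set (FA k X)} (hGB : IsGrobner 𝔞 G)
    (hmon : ∀ g ∈ G, g.coeff (lw g) = 1) (n : ℕ)
    (hfin : {u : FreeMonoid X | mdeg e u = n}.Finite) :
    hilb e 𝔞 n = ({u : FreeMonoid X | mdeg e u = n} ∩ nw G).ncard := by
  classical
  set S : Set (FreeMonoid X) := {u | mdeg e u = n} with hS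
  set T : Set (FreeMonoid X) := S ∩ nw G with hT
  have hTfin : T.Finite := hfin.subset Set.inter_subset_left
  haveI : Fintype T := hTfin.fintype
  have hmono_img : ∀ (A : Set (FreeMonoid X)),
      ((fun i => (MonoidAlgebra.coeffLinearEquiv k).symm (Finsupp.single i (1 : k))) '' A) = (fun u => mono k u) '' A := by
    intro A
    apply Set.image_congr'
    intro u
    rw [mono_single]
    rfl
  have hws : ∀ (A : Set (FreeMonoid X)),
      wsupported k A = Submodule.span k ((fun u => mono k u) '' A) := by
    intro A
    rw [NC2.wsupported, Finsupp.supported_eq_span_single, Submodule.comap_equiv_eq_map_symm,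
      Submodule.map_span, Set.image_image]
    exact congrArg _ (hmono_img A)
  have hkey : ∀ u ∈ S, 𝔞.mkQ (mono k u) ∈
      Submodule.span k (𝔞.mkQ '' ((fun u => mono k u) '' T)) := by
    intro u hu
    obtain ⟨h, h𝔞, hsupp⟩ := exists_nf hadm hh.1 hGB.1 hmon (mono k u)
    set p := homComp e n (mono k u - h) with hp
    have hdiff : mono k u - p ∈ 𝔞 := by
      rw [hp, homComp_sub, homComp_mono e hu, sub_sub_cancel]
      exact hh.2 h h𝔞 n
    have hps : p ∈ wsupported k T := by
      rw [NC2.wsupported, Submodule.mem_comap, Finsupp.mem_supported]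
      intro v hv
      rw [hp] at hv
      obtain ⟨h1, h2⟩ := (mem_support_homComp e n (mono k u - h) v).1 hv
      exact ⟨h2, hsupp v h1⟩
    have heq : 𝔞.mkQ (mono k u) = 𝔞.mkQ p := by
      rw [Submodule.mkQ_apply, Submodule.mkQ_apply, Submodule.Quotient.eq]
      exact hdiff
    rw [heq, ← Submodule.map_span, ← hws T]
    exact Submodule.mem_map_of_mem hps
  have hspan : (wsupported k S).map 𝔞.mkQ =
      Submodule.span k (𝔞.mkQ '' ((fun u => mono k u) '' T)) := by
    rw [hws S, Submodule.map_span]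
    apply le_antisymm
    · rw [Submodule.span_le]
      rintro x ⟨y, ⟨u, hu, rfl⟩, rfl⟩
      exact hkey u hu
    · exact Submodule.span_mono (Set.image_mono (Set.image_mono Set.inter_subset_left))
  have hli0 : LinearIndependent k (fun u : T => mono k (u : FreeMonoid X)) := by
    have h1 : LinearIndependent k (fun u : FreeMonoid X =>
        (MonoidAlgebra.coeffLinearEquiv k).symm (Finsupp.single u (1 : k))) := by
      have h2 := (Finsupp.basisSingleOne (R := k) (ι := FreeMonoid X)).linearIndependent
      simpa [Finsupp.coe_basisSingleOne, Function.comp_def] using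
        h2.map' (MonoidAlgebra.coeffLinearEquiv k).symm.toLinearMap (LinearEquiv.ker _)
    have h2 := h1.comp (Subtype.val : T → FreeMonoid X) Subtype.val_injective
    have h3 : (fun u : T => mono k (u : FreeMonoid X)) =
        (fun u : FreeMonoid X =>
          (MonoidAlgebra.coeffLinearEquiv k).symm (Finsupp.single u (1 : k))) ∘ (Subtype.val : T → FreeMonoid X) := by
      funext u
      rw [mono_single]
      rfl
    rw [h3]
    exact h2
  have hdisj : Submodule.span k (Set.range (fun u : T => mono k (u : FreeMonoid X))) ⊓
      LinearMap.ker 𝔞.mkQ = ⊥ := by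
    rw [Submodule.ker_mkQ, eq_bot_iff]
    rintro x ⟨hx1, hx2⟩
    rw [Submodule.mem_bot]
    by_contra hx0
    have hxsup : x ∈ wsupported k T := by
      rw [hws T]
      have : Set.range (fun u : T => mono k (u : FreeMonoid X)) = (fun u => mono k u) '' T := by
        rw [Set.image_eq_range]
      rwa [this] at hx1
    have hlwT : lw x ∈ T := by
      have h4 := (Finsupp.mem_supported k _).1 (Submodule.mem_comap.1 hxsup)
      exact h4 (lw_mem hx0)
    exact (hGB.2 x hx2 hx0) hlwT.2
  have hli : LinearIndependent k (𝔞.mkQ ∘ (fun u : T => mono k (u : FreeMonoid X))) :=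
    hli0.map (by rw [disjoint_iff]; exact hdisj)
  have himg : 𝔞.mkQ '' ((fun u => mono k u) '' T) =
      Set.range (𝔞.mkQ ∘ (fun u : T => mono k (u : FreeMonoid X))) := by
    rw [← Set.image_comp, Set.image_eq_range]
    rfl
  rw [NC2.hilb, NC2.hilbS, hspan, himg, finrank_span_eq_card hli]
  rw [Set.ncard_eq_toFinset_card', Set.toFinset_card]

end LA
namespace PD
open NC NC2 NC4 WordC BR LA

variable {k : Type} [Field k] {N : ℕ} [LinearOrder (FreeMonoid (Fin N))]

/-- sorted Lyndon-normal lists of total degree `n`. -/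
def Lists (G : Set (NC.FA k (Fin N))) (e : Fin N → ℕ) (n : ℕ) :
    Set (List (FreeMonoid (Fin N))) :=
  {l | (∀ u ∈ l, u ∈ LyndonNormal G) ∧ List.Chain' PlexLe l ∧ (l.map (mdeg e)).sum = n}

theorem map_toList_ofList (L : List (List (Fin N))) :
    (L.map (FreeMonoid.ofList (α := Fin N))).map FreeMonoid.toList = L := by
  rw [List.map_map]
  simp [Function.comp_def]

theorem bijOn_prod (G : Set (NC.FA k (Fin N))) (hLyn : ∀ u ∈ lwSet G, IsLyndon u)
    (e : Fin N → ℕ) (n : ℕ) :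
    Set.BijOn List.prod (Lists G e n) ({u : FreeMonoid (Fin N) | mdeg e u = n} ∩ nw G) := by
  refine ⟨?_, ?_, ?_⟩
  · -- maps to
    rintro l ⟨hmem, hch, hsum⟩
    refine ⟨by rw [Set.mem_setOf_eq, mdeg_prod]; exact hsum, ?_⟩
    intro v hv hfac
    have hvl : AL v.toList := (isLyndon_iff v).1 (hLyn v hv)
    rw [isFactor_iff] at hfac
    obtain ⟨w₁, w₂, hw⟩ := hfac
    rw [toList_prod] at hw
    have hALs : ∀ x ∈ l.map FreeMonoid.toList, AL x := by
      rintro x hx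
      obtain ⟨u, hu, rfl⟩ := List.mem_map.1 hx
      exact (isLyndon_iff u).1 (hmem u hu).1
    have hchs : (l.map FreeMonoid.toList).Chain' PLe := by
      rw [List.Chain', List.isChain_map]
      exact hch.imp (fun a b hab => (plexLe_iff a b).1 hab)
    obtain ⟨x, hx, w₁', w₂', hfac'⟩ := al_factor_of_flatten hALs hchs hvl ⟨w₁, w₂, hw⟩
    obtain ⟨u, hu, rfl⟩ := List.mem_map.1 hx
    exact (hmem u hu).2 v hv ((isFactor_iff v u).2 ⟨w₁', w₂', hfac'⟩)
  · -- injective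
    rintro l₁ ⟨hm₁, hc₁, _⟩ l₂ ⟨hm₂, hc₂, _⟩ hprod
    have h1 : l₁.map FreeMonoid.toList = l₂.map FreeMonoid.toList := by
      refine sorted_factorization_unique _ _ ?_ ?_ ?_ ?_ ?_
      · rintro x hx
        obtain ⟨u, hu, rfl⟩ := List.mem_map.1 hx
        exact (isLyndon_iff u).1 (hm₁ u hu).1
      · rw [List.Chain', List.isChain_map]
        exact hc₁.imp (fun a b hab => (plexLe_iff a b).1 hab)
      · rintro x hx
        obtain ⟨u, hu, rfl⟩ := List.mem_map.1 hx
        exact (isLyndon_iff u).1 (hm₂ u hu).1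
      · rw [List.Chain', List.isChain_map]
        exact hc₂.imp (fun a b hab => (plexLe_iff a b).1 hab)
      · rw [← toList_prod, ← toList_prod, hprod]
    exact List.map_injective_iff.2 toList_inj h1
  · -- surjective
    rintro w ⟨hwdeg, hwnw⟩
    obtain ⟨L, hAL, hch, hflat⟩ := exists_cfl w.toList
    have hprodw : (L.map FreeMonoid.ofList).prod = w := by
      apply toList_inj
      rw [toList_prod, map_toList_ofList, hflat]
    refine ⟨L.map FreeMonoid.ofList, ⟨?_, ?_, ?_⟩, hprodw⟩
    · rintro u hu
      obtain ⟨m, hm, rfl⟩ := List.mem_map.1 hu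
      constructor
      · rw [isLyndon_iff, FreeMonoid.toList_ofList]
        exact hAL m hm
      · refine nw_of_factor hwnw ?_
        rw [isFactor_iff, FreeMonoid.toList_ofList]
        obtain ⟨w₁, w₂, hfac⟩ := factor_of_mem_flatten hm
        exact ⟨w₁, w₂, by rw [hfac, hflat]⟩
    · rw [List.Chain', List.isChain_map]
      refine hch.imp (fun a b hab => ?_)
      rw [plexLe_iff, FreeMonoid.toList_ofList, FreeMonoid.toList_ofList]
      exact hab
    · rw [← mdeg_prod, hprodw]
      exact hwdeg

theorem ncard_lists_eq (G : Set (NC.FA k (Fin N))) (hLyn : ∀ u ∈ lwSet G, IsLyndon u)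
    (e : Fin N → ℕ) (n : ℕ) :
    ({u : FreeMonoid (Fin N) | mdeg e u = n} ∩ nw G).ncard = (Lists G e n).ncard := by
  have hb := bijOn_prod G hLyn e n
  rw [← hb.image_eq, Set.ncard_image_of_injOn hb.injOn]

end PD
namespace PE
open NC NC2 NC4 WordC BR LA PD

/-! generic list counting tools -/

theorem length_le_sum_of_map {β : Type} (f : β → ℕ) :
    ∀ l : List β, (∀ x ∈ l, 1 ≤ f x) → l.length ≤ (l.map f).sum := by
  intro l
  induction l with
  | nil => simp
  | cons a l ih =>
    intro h
    simp only [List.length_cons, List.map_cons, List.sum_cons]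
    have h1 := h a (by simp)
    have h2 := ih (fun x hx => h x (by simp [hx]))
    omega

theorem finite_lists_subset {β : Type} {S : Set β} (hS : S.Finite) (n : ℕ) :
    {l : List β | (∀ u ∈ l, u ∈ S) ∧ l.length ≤ n}.Finite := by
  haveI := hS.to_subtype
  have hfin : {l : List ↥S | l.length ≤ n}.Finite := List.finite_length_le ↥S n
  apply (hfin.image (List.map Subtype.val)).subset
  rintro l ⟨hmem, hlen⟩
  refine ⟨l.pmap (fun u hu => (⟨u, hu⟩ : ↥S)) hmem, by simpa using hlen, ?_⟩
  rw [List.map_pmap]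
  simp

/-- The merged multiplicity list construction. -/
def mkL {β : Type} : List β → List ℕ → List β
  | [], _ => []
  | _ :: _, [] => []
  | a :: E, m :: cs => List.replicate m a ++ mkL E cs

theorem mem_mkL {β : Type} : ∀ {E : List β} {cs : List ℕ} {x : β}, x ∈ mkL E cs → x ∈ E := by
  intro E
  induction E with
  | nil => intro cs x hx; simp [mkL] at hx
  | cons a E ih =>
    intro cs x hx
    cases cs with
    | nil => simp [mkL] at hx
    | cons m cs =>
      rw [mkL, List.mem_append] at hx
      rcases hx with h | h
      · rw [List.eq_of_mem_replicate h]; simp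
      · simp [ih h]

theorem chain'_replicate {β : Type} {R : β → β → Prop} {a : β} (h : R a a) (m : ℕ) :
    List.Chain' R (List.replicate m a) := by
  induction m with
  | zero => simp [List.Chain']
  | succ m ih =>
    cases m with
    | zero => simp [List.Chain']
    | succ m' =>
      rw [List.replicate_succ, List.replicate_succ, List.Chain', List.isChain_cons_cons, ← List.replicate_succ]
      exact ⟨h, ih⟩

theorem chain'_mkL {β : Type} {R : β → β → Prop} :
    ∀ (E : List β) (cs : List ℕ), (∀ a ∈ E, R a a) → E.Pairwise R →
      List.Chain' R (mkL E cs) := by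
  intro E
  induction E with
  | nil => intro cs _ _; simp [mkL, List.Chain']
  | cons a E ih =>
    intro cs hrefl hpw
    cases cs with
    | nil => simp [mkL, List.Chain']
    | cons m cs =>
      rw [mkL]
      apply List.IsChain.append (chain'_replicate (hrefl a (by simp)) m)
        (ih cs (fun x hx => hrefl x (by simp [hx])) (List.pairwise_cons.1 hpw).2)
      · intro x hx y hy
        have hxa : x = a := List.eq_of_mem_replicate (List.mem_of_mem_getLast? hx)
        have hyE : y ∈ E := mem_mkL (List.mem_of_mem_head? hy)
        rw [hxa]
        exact (List.pairwise_cons.1 hpw).1 y hyE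

theorem count_mkL {β : Type} [DecidableEq β] :
    ∀ (E : List β) (cs : List ℕ), E.Nodup → cs.length = E.length →
      ∀ (i : ℕ) (hiE : i < E.length) (hics : i < cs.length),
      (mkL E cs).count E[i] = cs[i] := by
  intro E
  induction E with
  | nil => intro cs _ _ i hiE; simp at hiE
  | cons a E ih =>
    intro cs hnd hlen i hiE hics
    cases cs with
    | nil => simp at hlen
    | cons m cs =>
      rw [mkL, List.count_append]
      cases i with
      | zero =>
        simp only [List.getElem_cons_zero]
        have h1 : (List.replicate m a).count a = m := by
          rw [List.count_replicate]
          simp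
        have h2 : (mkL E cs).count a = 0 := by
          rw [List.count_eq_zero]
          intro hmem
          exact (List.nodup_cons.1 hnd).1 (mem_mkL hmem)
        simp [h1, h2]
      | succ i =>
        simp only [List.getElem_cons_succ]
        have hiE' : i < E.length := by simpa using hiE
        have h1 : (List.replicate m a).count E[i] = 0 := by
          rw [List.count_replicate, if_neg]
          intro h
          have h' := eq_of_beq h
          refine (List.nodup_cons.1 hnd).1 ?_
          first
          | (rw [h']; exact List.getElem_mem hiE')
          | (rw [← h']; exact List.getElem_mem hiE')
        have h2 := ih cs (List.nodup_cons.1 hnd).2 (by simpa using hlen) i hiE'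
          (by simp at hics ⊢; omega)
        simp [h1, h2]

theorem sum_map_mkL_le {β : Type} (f : β → ℕ) (D Q : ℕ) :
    ∀ (E : List β) (cs : List ℕ), (∀ a ∈ E, f a ≤ D) → (∀ m ∈ cs, m ≤ Q) →
      ((mkL E cs).map f).sum ≤ E.length * (Q * D) := by
  intro E
  induction E with
  | nil => intro cs _ _; simp [mkL]
  | cons a E ih =>
    intro cs hE hcs
    cases cs with
    | nil => simp [mkL]
    | cons m cs =>
      rw [mkL, List.map_append, List.sum_append]
      have h1 : ((List.replicate m a).map f).sum = m * f a := by
        rw [List.map_replicate, List.sum_replicate, smul_eq_mul]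
      have h2 : m * f a ≤ Q * D :=
        Nat.mul_le_mul (hcs m (by simp)) (hE a (by simp))
      have h3 := ih cs (fun x hx => hE x (by simp [hx])) (fun x hx => hcs x (by simp [hx]))
      simp only [List.length_cons]
      rw [h1]
      calc m * f a + ((mkL E cs).map f).sum ≤ Q * D + E.length * (Q * D) := by omega
        _ = (E.length + 1) * (Q * D) := by ring

theorem pow_le_imp {a b B : ℕ} (h : ∀ n, (n + 1) ^ a ≤ B * (n + 1) ^ b) : a ≤ b := by
  by_contra hab
  push_neg at hab
  have h1 := h B
  have h2 : (B + 1) ^ (b + 1) ≤ (B + 1) ^ a := Nat.pow_le_pow_right (by omega) (by omega)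
  rw [pow_succ] at h2
  have h3 : 1 ≤ (B + 1) ^ b := Nat.one_le_pow _ _ (by omega)
  have h4 : (B + 1) ^ b * (B + 1) ≤ B * (B + 1) ^ b := le_trans h2 h1
  have h5 : (B + 1) ^ b * (B + 1) = B * (B + 1) ^ b + (B + 1) ^ b := by ring
  omega

/-! specialized to the Lyndon-normal setting -/

variable {k : Type} [Field k] {N : ℕ} [LinearOrder (FreeMonoid (Fin N))]

instance : IsTotal (FreeMonoid (Fin N)) PlexLe :=
  ⟨fun a b => by
    rcases ple_total a.toList b.toList with h | h
    · exact Or.inl ((plexLe_iff a b).2 h)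
    · exact Or.inr ((plexLe_iff b a).2 h)⟩

def AllLists (G : Set (NC.FA k (Fin N))) (e : Fin N → ℕ) (n : ℕ) :
    Set (List (FreeMonoid (Fin N))) :=
  {l | (∀ u ∈ l, u ∈ LyndonNormal G) ∧ List.Chain' PlexLe l ∧ (l.map (mdeg e)).sum ≤ n}

theorem mdeg_le_set_finite {e : Fin N → ℕ} (he : ∀ x, 0 < e x) (n : ℕ) :
    {u : FreeMonoid (Fin N) | mdeg e u ≤ n}.Finite := by
  have h1 : {u : FreeMonoid (Fin N) | mdeg e u ≤ n} ⊆
      FreeMonoid.toList ⁻¹' {l : List (Fin N) | l.length ≤ n} := by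
    intro u hu
    simp only [Set.mem_preimage, Set.mem_setOf_eq]
    exact le_trans (length_le_mdeg he u) hu
  exact ((List.finite_length_le (Fin N) n).preimage toList_inj.injOn).subset h1

theorem allLists_subset {G : Set (NC.FA k (Fin N))} {e : Fin N → ℕ} (he : ∀ x, 0 < e x)
    (n : ℕ) : AllLists G e n ⊆
      {l : List (FreeMonoid (Fin N)) |
        (∀ u ∈ l, u ∈ {v : FreeMonoid (Fin N) | mdeg e v ≤ n}) ∧ l.length ≤ n} := by
  rintro l ⟨hm, _, hs⟩
  constructor
  · intro u hu
    have h1 : mdeg e u ∈ l.map (mdeg e) := List.mem_map_of_mem hu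
    exact le_trans (List.single_le_sum (fun x _ => Nat.zero_le x) _ h1) hs
  · refine le_trans (length_le_sum_of_map (mdeg e) l (fun x hx => ?_)) hs
    exact one_le_mdeg he (hm x hx).1.1

theorem allLists_finite {G : Set (NC.FA k (Fin N))} {e : Fin N → ℕ} (he : ∀ x, 0 < e x)
    (n : ℕ) : (AllLists G e n).Finite :=
  (finite_lists_subset (mdeg_le_set_finite he n) n).subset (allLists_subset he n)

theorem lists_subset_allLists (G : Set (NC.FA k (Fin N))) (e : Fin N → ℕ) (n : ℕ) :
    PD.Lists G e n ⊆ AllLists G e n := by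
  rintro l ⟨h1, h2, h3⟩
  exact ⟨h1, h2, le_of_eq h3⟩

theorem lists_finite {G : Set (NC.FA k (Fin N))} {e : Fin N → ℕ} (he : ∀ x, 0 < e x)
    (n : ℕ) : (PD.Lists G e n).Finite :=
  (allLists_finite he n).subset (lists_subset_allLists G e n)

theorem psum_allLists {G : Set (NC.FA k (Fin N))} {e : Fin N → ℕ} (he : ∀ x, 0 < e x)
    (n : ℕ) :
    psum (fun m => (PD.Lists G e m).ncard) n = (AllLists G e n).ncard := by
  induction n with
  | zero =>
    rw [NC2.psum, Finset.sum_range_one]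
    congr 1
    ext l
    simp only [AllLists, PD.Lists, Set.mem_setOf_eq, Nat.le_zero]
  | succ n ih =>
    rw [NC2.psum, Finset.sum_range_succ, ← NC2.psum, ih]
    have hsplit : AllLists G e (n + 1) = AllLists G e n ∪ PD.Lists G e (n + 1) := by
      ext l
      simp only [AllLists, PD.Lists, Set.mem_setOf_eq, Set.mem_union]
      constructor
      · rintro ⟨h1, h2, h3⟩
        rcases Nat.lt_or_ge ((l.map (mdeg e)).sum) (n + 1) with h | h
        · exact Or.inl ⟨h1, h2, by omega⟩
        · exact Or.inr ⟨h1, h2, by omega⟩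
      · rintro (⟨h1, h2, h3⟩ | ⟨h1, h2, h3⟩)
        · exact ⟨h1, h2, by omega⟩
        · exact ⟨h1, h2, by omega⟩
    rw [hsplit, Set.ncard_union_eq ?_ (allLists_finite he n) (lists_finite he (n + 1))]
    rw [Set.disjoint_left]
    rintro l ⟨_, _, h3⟩ ⟨_, _, h4⟩
    omega

theorem upper_bound {G : Set (NC.FA k (Fin N))} {e : Fin N → ℕ} (he : ∀ x, 0 < e x)
    (hfin : (LyndonNormal (k := k) G).Finite) (n : ℕ) :
    (AllLists G e n).ncard ≤ (n + 1) ^ (LyndonNormal (k := k) G).ncard := by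
  classical
  haveI := hfin.to_subtype
  set 𝔏 := LyndonNormal (k := k) G with h𝔏
  set Ψ : List (FreeMonoid (Fin N)) → (↥𝔏 → Fin (n + 1)) :=
    fun l u => ⟨min (l.count u.val) n, Nat.lt_succ_of_le (min_le_right _ _)⟩ with hΨ
  have hcount_le : ∀ l ∈ AllLists G e n, ∀ u : FreeMonoid (Fin N), l.count u ≤ n := by
    intro l hl u
    have h1 := (allLists_subset he n hl).2
    exact le_trans (List.count_le_length) h1
  have hinj : Set.InjOn Ψ (AllLists G e n) := by
    intro l₁ h₁ l₂ h₂ heq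
    have hcnt : ∀ u : FreeMonoid (Fin N), l₁.count u = l₂.count u := by
      intro u
      by_cases hu : u ∈ 𝔏
      · have := congrFun heq ⟨u, hu⟩
        rw [hΨ] at this
        simp only [Fin.mk.injEq] at this
        have c1 := hcount_le l₁ h₁ u
        have c2 := hcount_le l₂ h₂ u
        omega
      · rw [List.count_eq_zero.2 (fun hm => hu (h₁.1 u hm)),
          List.count_eq_zero.2 (fun hm => hu (h₂.1 u hm))]
    have hperm : List.Perm l₁ l₂ := by
      rw [← Multiset.coe_eq_coe]
      apply Multiset.ext.2
      intro a
      rw [Multiset.coe_count, Multiset.coe_count]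
      exact hcnt a
    exact hperm.eq_of_pairwise'
      (List.isChain_iff_pairwise.1 h₁.2.1) (List.isChain_iff_pairwise.1 h₂.2.1)
  calc (AllLists G e n).ncard = (Ψ '' AllLists G e n).ncard :=
        (Set.ncard_image_of_injOn hinj).symm
    _ ≤ (Set.univ : Set (↥𝔏 → Fin (n + 1))).ncard :=
        Set.ncard_le_ncard (Set.subset_univ _) Set.finite_univ
    _ = Nat.card (↥𝔏 → Fin (n + 1)) := Set.ncard_univ _
    _ = (n + 1) ^ 𝔏.ncard := by
        rw [Nat.card_fun]
        simp [Nat.card_coe_set_eq]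

theorem lower_bound {G : Set (NC.FA k (Fin N))} {e : Fin N → ℕ} (he : ∀ x, 0 < e x)
    {F : Set (FreeMonoid (Fin N))} (hFfin : F.Finite)
    (hFsub : F ⊆ LyndonNormal (k := k) G) :
    ∃ B : ℕ, 0 < B ∧ ∀ n, (n + 1) ^ F.ncard ≤ B * (AllLists G e n).ncard := by
  classical
  letI : DecidableRel (PlexLe (N := N)) := fun a b => Classical.dec _
  set E : List (FreeMonoid (Fin N)) := hFfin.toFinset.sort PlexLe with hE
  have hEsort : E.Pairwise PlexLe := Finset.pairwise_sort _ _
  have hEnodup : E.Nodup := Finset.sort_nodup _ _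
  have hEmem : ∀ a, a ∈ E ↔ a ∈ F := by
    intro a
    rw [hE, Finset.mem_sort, Set.Finite.mem_toFinset]
  have hElen : E.length = F.ncard := by
    rw [hE, Finset.length_sort, Set.ncard_eq_toFinset_card _ hFfin]
  set d := E.length with hd
  set D : ℕ := (E.map (mdeg e)).sum + 1 with hD
  have hDbound : ∀ a ∈ E, mdeg e a ≤ D := by
    intro a ha
    have : mdeg e a ∈ E.map (mdeg e) := List.mem_map_of_mem ha
    have h1 := List.single_le_sum (fun x _ => Nat.zero_le x) _ this
    omega
  set q : ℕ := d * D + 1 with hq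
  refine ⟨q ^ d, Nat.pow_pos (by omega), fun n => ?_⟩
  set Q := n / q with hQ
  set Φ : (Fin d → Fin (Q + 1)) → List (FreeMonoid (Fin N)) :=
    fun c => mkL E ((List.finRange d).map (fun i => (c i : ℕ))) with hΦ
  have hmemΦ : ∀ c, Φ c ∈ AllLists G e n := by
    intro c
    refine ⟨?_, ?_, ?_⟩
    · intro u hu
      exact hFsub ((hEmem u).1 (mem_mkL hu))
    · exact chain'_mkL E _ (fun a _ => Or.inl rfl) hEsort
    · have hcsle : ∀ m ∈ (List.finRange d).map (fun i => ((c i : ℕ))), m ≤ Q := by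
        intro m hm
        obtain ⟨i, _, rfl⟩ := List.mem_map.1 hm
        exact Nat.lt_succ_iff.1 (c i).isLt
      have h1 := sum_map_mkL_le (mdeg e) D Q E ((List.finRange d).map (fun i => (c i : ℕ)))
        hDbound hcsle
      have h2 : E.length * (Q * D) ≤ Q * q := by
        calc E.length * (Q * D) = Q * (E.length * D) := by ring
          _ ≤ Q * q := Nat.mul_le_mul_left _ (by rw [hq, ← hd]; omega)
      have h3 : Q * q ≤ n := by rw [hQ]; exact Nat.div_mul_le_self n q
      simp only [hΦ]
      exact le_trans h1 (le_trans h2 h3)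
  have hinj : Function.Injective Φ := by
    intro c₁ c₂ hcc
    funext i
    have hlen₁ : ((List.finRange d).map fun j => ((c₁ j : ℕ))).length = E.length := by simp [hd]
    have hlen₂ : ((List.finRange d).map fun j => ((c₂ j : ℕ))).length = E.length := by simp [hd]
    have e₁ := count_mkL E _ hEnodup hlen₁ i.val i.isLt (by simpa using i.isLt)
    have e₂ := count_mkL E _ hEnodup hlen₂ i.val i.isLt (by simpa using i.isLt)
    rw [hΦ] at hcc
    simp only at hcc
    rw [hcc] at e₁
    rw [e₂] at e₁
    apply Fin.ext
    simpa using e₁.symm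
  have hcard : (Q + 1) ^ d ≤ (AllLists G e n).ncard := by
    have h1 : Set.range Φ ⊆ AllLists G e n := by rintro x ⟨c, rfl⟩; exact hmemΦ c
    have h2 : (Set.range Φ).ncard ≤ (AllLists G e n).ncard :=
      Set.ncard_le_ncard h1 (allLists_finite he n)
    have h3 : (Set.range Φ).ncard = (Q + 1) ^ d := by
      rw [← Nat.card_coe_set_eq, Nat.card_range_of_injective hinj, Nat.card_fun]
      simp
    omega
  have hq0 : 0 < q := by omega
  have hdiv : n + 1 ≤ (Q + 1) * q := by
    have h1 := Nat.div_add_mod n q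
    have h2 := Nat.mod_lt n hq0
    have h3 : Q * q = q * (n / q) := by rw [hQ, Nat.mul_comm]
    have h4 : (Q + 1) * q = Q * q + q := by ring
    omega
  calc (n + 1) ^ F.ncard = (n + 1) ^ d := by rw [hElen]
    _ ≤ ((Q + 1) * q) ^ d := Nat.pow_le_pow_left hdiv d
    _ = q ^ d * (Q + 1) ^ d := by rw [mul_pow, Nat.mul_comm]
    _ ≤ q ^ d * (AllLists G e n).ncard := Nat.mul_le_mul_left _ hcard

end PE

/-- if the obstructions of the reduced Gröbner basis `G` of a homogeneous
ideal consist of Lyndon words, then the Hilbert series of `A = k⟨X⟩/𝔞` is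
`∏_{u ∈ 𝔏(G)} (1 - t^{deg u})⁻¹` (coefficientwise, the `n`-th coefficient of the
product being the number of `≤_plex`-sorted lists from `𝔏(G)` of total degree `n`),
the Gelfand-Kirillov dimension of `A` equals the cardinality of `𝔏(G)`, and `A` has
polynomial growth iff `𝔏(G)` is finite. -/
theorem stmt_7 (k : Type) [Field k] (N : ℕ) [LinearOrder (FreeMonoid (Fin N))]
    (hadm : NC.IsAdmissible (Fin N)) (e : Fin N → ℕ) (he : ∀ x, 0 < e x)
    (𝔞 : Submodule k (NC.FA k (Fin N))) (hh : NC2.IsHomogIdeal e 𝔞)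
    (G : Set (NC.FA k (Fin N))) (hGB : NC.IsGrobner 𝔞 G) (hred : NC.IsReducedGB G)
    (hLyn : ∀ u ∈ NC.lwSet G, NC4.IsLyndon u) :
    (∀ n : ℕ, NC2.hilb e 𝔞 n =
      Set.ncard {l : List (FreeMonoid (Fin N)) |
        (∀ u ∈ l, u ∈ NC4.LyndonNormal G) ∧ List.Chain' NC4.PlexLe l ∧
        (l.map (NC2.mdeg e)).sum = n}) ∧
    NC2.gkdimH (fun n => NC2.hilb e 𝔞 n) = (NC4.LyndonNormal (k := k) G).encard ∧
    (NC2.PolyGrowth (fun n => NC2.hilb e 𝔞 n) ↔ (NC4.LyndonNormal (k := k) G).Finite) := by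
  classical
  have hmon : ∀ g ∈ G, g.coeff (NC.lw g) = 1 := fun g hg => (hred g hg).1
  have hpart1 : ∀ n : ℕ, NC2.hilb e 𝔞 n = (PD.Lists G e n).ncard := by
    intro n
    rw [LA.hilb_eq_ncard hadm e hh hGB hmon n (BR.mdeg_set_finite he n),
      PD.ncard_lists_eq G hLyn e n]
  set H : ℕ → ℕ := fun n => NC2.hilb e 𝔞 n with hHdef
  have hpsum : ∀ n, NC2.psum H n = (PE.AllLists G e n).ncard := by
    intro n
    have h1 : NC2.psum H n = NC2.psum (fun m => (PD.Lists G e m).ncard) n := by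
      unfold NC2.psum
      exact Finset.sum_congr rfl (fun i _ => hpart1 i)
    rw [h1, PE.psum_allLists he n]
  refine ⟨fun n => hpart1 n, ?_⟩
  by_cases hfin : (NC4.LyndonNormal (k := k) G).Finite
  · -- finite case
    set d := (NC4.LyndonNormal (k := k) G).ncard with hdd
    have hub : NC2.PolyBoundedBy H d := by
      refine ⟨1, fun n => ?_⟩
      rw [one_mul, hpsum n]
      exact PE.upper_bound he hfin n
    obtain ⟨B, hB0, hBl⟩ := PE.lower_bound he hfin (subset_refl _)
    have hlow : ∀ n, (n + 1) ^ d ≤ B * NC2.psum H n := by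
      intro n
      rw [hpsum n]
      exact hBl n
    constructor
    · -- gkdim
      have henc : (NC4.LyndonNormal (k := k) G).encard = (d : ℕ∞) := by
        rw [hfin.encard_eq_coe_toFinset_card, hdd, Set.ncard_eq_toFinset_card _ hfin]
      rw [henc]
      apply le_antisymm
      · exact sInf_le ⟨d, hub, rfl⟩
      · apply le_sInf
        rintro b ⟨d', hd', rfl⟩
        rw [Nat.cast_le]
        obtain ⟨C, hC⟩ := hd'
        refine PE.pow_le_imp (B := B * C) (fun n => ?_)
        calc (n + 1) ^ d ≤ B * NC2.psum H n := hlow n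
          _ ≤ B * (C * (n + 1) ^ d') := Nat.mul_le_mul_left _ (hC n)
          _ = B * C * (n + 1) ^ d' := by ring
    · exact ⟨fun _ => hfin, fun _ => ⟨d, hub⟩⟩
  · -- infinite case
    have hinf : (NC4.LyndonNormal (k := k) G).Infinite := hfin
    have hnopoly : ∀ d : ℕ, ¬ NC2.PolyBoundedBy H d := by
      rintro d ⟨C, hC⟩
      obtain ⟨F, hFsub, hFfin, hFcard⟩ := hinf.exists_subset_ncard_eq (d + 1)
      obtain ⟨B, hB0, hBl⟩ := PE.lower_bound he hFfin hFsub
      have hkey : ∀ n, (n + 1) ^ (d + 1) ≤ B * C * (n + 1) ^ d := by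
        intro n
        calc (n + 1) ^ (d + 1) = (n + 1) ^ F.ncard := by rw [hFcard]
          _ ≤ B * (PE.AllLists G e n).ncard := hBl n
          _ = B * NC2.psum H n := by rw [hpsum n]
          _ ≤ B * (C * (n + 1) ^ d) := Nat.mul_le_mul_left _ (hC n)
          _ = B * C * (n + 1) ^ d := by ring
      have := PE.pow_le_imp hkey
      omega
    constructor
    · have h1 : {d : ℕ | NC2.PolyBoundedBy H d} = ∅ := by
        ext d
        simp [hnopoly d]
      rw [NC2.gkdimH, h1, hinf.encard_eq]
      simp
    · exact ⟨fun ⟨d, hd⟩ => absurd hd (hnopoly d), fun h => absurd h hfin⟩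
end
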